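/- For every angle θ with 0 < θ < π, there exists a tiling of the Euclidean plane ℝ² by isometric copies of the unit equilateral triangle T and the unit rhombus R(θ), in which both prototiles are used (at least one tile congruent to T and at least one congruent to R(θ) occur), and which is non-periodic: there is no nonzero vector v ∈ ℝ² such that translating every tile by v maps the set of tiles onto itself. -/

import Mathlib

noncomputable section

open Set Metric

/-- The Euclidean plane ℝ². -/
abbrev Pt : Type := EuclideanSpace ℝ (Fin 2)

/-- A point of the plane from coordinates. -/
def pt (a b : ℝ) : Pt := WithLp.toLp 2 ![a, b]

/-- The unit equilateral triangle. -/
def uT : Set Pt := convexHull ℝ {pt 0 0, pt 1 0, pt (1/2) (Real.sqrt 3 / 2)}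

/-- The unit rhombus of angle θ. -/
def uR (θ : ℝ) : Set Pt :=
  convexHull ℝ
    {pt 0 0, pt 1 0, pt (Real.cos θ) (Real.sin θ), pt (1 + Real.cos θ) (Real.sin θ)}

/-- `𝒯` is a tiling of the plane by isometric copies of the prototiles in `protos`. -/
def IsTilingBy (𝒯 : Set (Set Pt)) (protos : Set (Set Pt)) : Prop :=
  𝒯.Countable ∧ ⋃₀ 𝒯 = univ ∧
  (∀ t ∈ 𝒯, ∀ s ∈ 𝒯, t ≠ s → interior t ∩ interior s = ∅) ∧
  (∀ t ∈ 𝒯, ∃ P ∈ protos, ∃ f : Pt ≃ᵢ Pt, t = f '' P)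

/-- Translating every tile of `𝒯` by `v`. -/
def translateTiles (v : Pt) (𝒯 : Set (Set Pt)) : Set (Set Pt) :=
  (fun t => (fun x => x + v) '' t) '' 𝒯

/-- `𝒯` is non-periodic: no nonzero translation maps the set of tiles onto itself. -/
def Nonperiodic (𝒯 : Set (Set Pt)) : Prop :=
  ∀ v : Pt, v ≠ 0 → translateTiles v 𝒯 ≠ 𝒯

set_option linter.unusedSectionVars false
namespace NP

@[simp] lemma pt_app0 (a b : ℝ) : pt a b 0 = a := rfl
@[simp] lemma pt_app1 (a b : ℝ) : pt a b 1 = b := rfl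
@[simp] lemma add_app (p q : Pt) (i : Fin 2) : (p + q) i = p i + q i := rfl
@[simp] lemma smul_app (r : ℝ) (p : Pt) (i : Fin 2) : (r • p) i = r * p i := rfl
@[simp] lemma neg_app (p : Pt) (i : Fin 2) : (-p) i = -(p i) := rfl
@[simp] lemma sub_app (p q : Pt) (i : Fin 2) : (p - q) i = p i - q i := rfl
@[simp] lemma zero_app (i : Fin 2) : (0 : Pt) i = 0 := rfl

lemma pt_ext {p q : Pt} (h0 : p 0 = q 0) (h1 : p 1 = q 1) : p = q := by
  apply (WithLp.ext_iff (p := 2)).2; funext i; fin_cases i <;> assumption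

lemma pt_zero : pt 0 0 = 0 := by apply pt_ext <;> simp

/-- 2x2 determinant of two vectors. -/
def dd (p q : Pt) : ℝ := p 0 * q 1 - p 1 * q 0

lemma dd_pt (a b a' b' : ℝ) : dd (pt a b) (pt a' b') = a * b' - b * a' := rfl

@[simp] lemma dd_self (p : Pt) : dd p p = 0 := by simp [dd]; ring

lemma dd_swap (p q : Pt) : dd q p = - dd p q := by simp [dd]; ring

lemma dd_add_right (g p q : Pt) : dd g (p + q) = dd g p + dd g q := by simp [dd]; ring

lemma dd_add_left (p q g : Pt) : dd (p + q) g = dd p g + dd q g := by simp [dd]; ring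

lemma dd_smul_right (r : ℝ) (g p : Pt) : dd g (r • p) = r * dd g p := by simp [dd]; ring

lemma dd_smul_left (r : ℝ) (g p : Pt) : dd (r • p) g = r * dd p g := by simp [dd]; ring

@[simp] lemma dd_zero_right (g : Pt) : dd g 0 = 0 := by simp [dd]

@[simp] lemma dd_zero_left (g : Pt) : dd 0 g = 0 := by simp [dd]

lemma dd_comb (g v w : Pt) (a b : ℝ) :
    dd g (a • v + b • w) = a * dd g v + b * dd g w := by simp [dd]; ring

lemma dd_comb' (g v w : Pt) (a b : ℝ) :
    dd (a • v + b • w) g = a * dd v g + b * dd w g := by simp [dd]; ring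

lemma dd_ne_zero_left {g p : Pt} (h : dd g p ≠ 0) : g ≠ 0 := by
  rintro rfl; simp at h

/-- the fundamental expansion identity -/
lemma dd_identity (v w p : Pt) : (dd v w) • p = (dd p w) • v + (dd v p) • w := by
  apply pt_ext <;> simp [dd] <;> ring

lemma cone_expand {v w p : Pt} (hD : dd v w ≠ 0) :
    p = (dd p w / dd v w) • v + (dd v p / dd v w) • w := by
  have h := dd_identity v w p
  have h0 := congrArg (fun q : Pt => q 0) h
  have h1 := congrArg (fun q : Pt => q 1) h
  simp only [smul_app, add_app] at h0 h1
  apply pt_ext <;> simp only [smul_app, add_app] <;> field_simp <;> linarith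

/-- linear functional given by dd g -/
def ddL (g : Pt) : Pt →ₗ[ℝ] ℝ where
  toFun p := dd g p
  map_add' p q := dd_add_right g p q
  map_smul' r p := by simp [dd_smul_right]

@[simp] lemma ddL_apply (g p : Pt) : ddL g p = dd g p := rfl

lemma isLinearMap_dd (g : Pt) : IsLinearMap ℝ (fun p => dd g p) :=
  ⟨dd_add_right g, fun r p => by rw [dd_smul_right]; rfl⟩

lemma convex_le (g : Pt) (cst : ℝ) : Convex ℝ {p : Pt | dd g p ≤ cst} :=
  convex_halfSpace_le (isLinearMap_dd g) cst

lemma convex_ge (g : Pt) (cst : ℝ) : Convex ℝ {p : Pt | cst ≤ dd g p} :=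
  convex_halfSpace_ge (isLinearMap_dd g) cst

/-- interiors of sets separated by a line are disjoint -/
lemma int_disjoint {g : Pt} (hg : g ≠ 0) (cst : ℝ) {t u : Set Pt}
    (ht : t ⊆ {p : Pt | dd g p ≤ cst}) (hu : u ⊆ {p : Pt | cst ≤ dd g p}) :
    interior t ∩ interior u = ∅ := by
  by_contra h
  obtain ⟨x, hxt, hxu⟩ := Set.nonempty_iff_ne_empty.2 h
  have hxc : dd g x = cst :=
    le_antisymm (ht (interior_subset hxt)) (hu (interior_subset hxu))
  -- perturbation direction
  set η : Pt := pt (- g 1) (g 0) with hη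
  have hηpos : 0 < dd g η := by
    have : dd g η = g 0 * g 0 + g 1 * g 1 := by simp [dd, hη]
    rw [this]
    rcases (by by_contra hc; push_neg at hc
               exact hg (pt_ext (by simpa using hc.1) (by simpa using hc.2)) :
            g 0 ≠ 0 ∨ g 1 ≠ 0) with h0 | h1
    · nlinarith [sq_nonneg (g 1), sq_nonneg (g 0), mul_self_pos.2 h0]
    · nlinarith [sq_nonneg (g 1), sq_nonneg (g 0), mul_self_pos.2 h1]
  obtain ⟨ε, hε, hball⟩ := Metric.isOpen_iff.1 isOpen_interior x hxt
  set δ := ε / (2 * (‖η‖ + 1)) with hδ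
  have hnormpos : (0:ℝ) < ‖η‖ + 1 := by positivity
  have hδpos : 0 < δ := by positivity
  have hmem : x + δ • η ∈ t := by
    apply interior_subset
    apply hball
    rw [Metric.mem_ball, dist_eq_norm]
    have : x + δ • η - x = δ • η := by abel
    rw [this, norm_smul]
    have h1 : ‖η‖ < ‖η‖ + 1 := by linarith
    rw [Real.norm_eq_abs, abs_of_pos hδpos]
    calc δ * ‖η‖ ≤ δ * (‖η‖ + 1) := by nlinarith [norm_nonneg η]
    _ = ε / 2 := by rw [hδ]; field_simp
    _ < ε := by linarith
  have := ht hmem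
  simp only [Set.mem_setOf_eq, dd_add_right, dd_smul_right, hxc] at this
  nlinarith

noncomputable instance : DecidableEq Pt := Classical.decEq _

/-- the closed convex cone spanned by v, w -/
def cone (v w : Pt) : Set Pt := {p | 0 ≤ dd p w ∧ 0 ≤ dd v p}

lemma zero_mem_cone (v w : Pt) : (0 : Pt) ∈ cone v w := by simp [cone]

lemma mem_cone_comb {v w : Pt} (hD : 0 ≤ dd v w) {a b : ℝ} (ha : 0 ≤ a) (hb : 0 ≤ b) :
    a • v + b • w ∈ cone v w := by
  constructor
  · rw [dd_comb']
    simp only [dd_self, mul_zero, add_zero]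
    have hsw := dd_swap v w
    nlinarith
  · rw [dd_comb]
    simp only [dd_self, mul_zero, zero_add]
    nlinarith

lemma dd_eq_comb {g v w p : Pt} (hD : dd v w ≠ 0) :
    dd g p = (dd p w / dd v w) * dd g v + (dd v p / dd v w) * dd g w := by
  conv_lhs => rw [cone_expand (v := v) (w := w) (p := p) hD]
  rw [dd_comb]

lemma cone_sub_ge {g v w : Pt} (hD : 0 < dd v w) (h1 : 0 ≤ dd g v) (h2 : 0 ≤ dd g w) :
    cone v w ⊆ {p : Pt | 0 ≤ dd g p} := by
  intro p hp
  have heq := dd_eq_comb (g := g) (p := p) (ne_of_gt hD)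
  simp only [Set.mem_setOf_eq, heq]
  have h3 := hp.1; have h4 := hp.2
  positivity

lemma cone_sub_le {g v w : Pt} (hD : 0 < dd v w) (h1 : dd g v ≤ 0) (h2 : dd g w ≤ 0) :
    cone v w ⊆ {p : Pt | dd g p ≤ 0} := by
  intro p hp
  have heq := dd_eq_comb (g := g) (p := p) (ne_of_gt hD)
  simp only [Set.mem_setOf_eq, heq]
  have h3 := hp.1; have h4 := hp.2
  have ha : 0 ≤ dd p w / dd v w := by positivity
  have hb : 0 ≤ dd v p / dd v w := by positivity
  nlinarith

lemma cone_ray_v {v w p : Pt} (hD : 0 < dd v w) (hp : p ∈ cone v w) (h : dd v p = 0) :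
    ∃ t : ℝ, 0 ≤ t ∧ p = t • v := by
  refine ⟨dd p w / dd v w, by have := hp.1; positivity, ?_⟩
  have hexp := cone_expand (v := v) (w := w) (p := p) (ne_of_gt hD)
  rw [h] at hexp
  simpa using hexp

lemma cone_ray_w {v w p : Pt} (hD : 0 < dd v w) (hp : p ∈ cone v w) (h : dd p w = 0) :
    ∃ t : ℝ, 0 ≤ t ∧ p = t • w := by
  refine ⟨dd v p / dd v w, by have := hp.2; positivity, ?_⟩
  have hexp := cone_expand (v := v) (w := w) (p := p) (ne_of_gt hD)
  rw [h] at hexp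
  simpa using hexp

/-! ### convex hull membership tools -/

lemma mem_hull_tri {q x y p : Pt} {a b : ℝ} (ha : 0 ≤ a) (hb : 0 ≤ b) (hab : a + b ≤ 1)
    (hp : p = q + a • x + b • y) : p ∈ convexHull ℝ ({q, q + x, q + y} : Set Pt) := by
  have hC : Convex ℝ (convexHull ℝ ({q, q + x, q + y} : Set Pt)) := convex_convexHull ℝ _
  have key : p = ∑ i : Fin 3, (![1 - a - b, a, b] i) • (![q, q + x, q + y] i) := by
    rw [hp, Fin.sum_univ_three]
    simp only [Matrix.cons_val_zero, Matrix.cons_val_one, Matrix.head_cons, Matrix.cons_val_two,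
      Matrix.tail_cons]
    module
  rw [key]
  apply hC.sum_mem
  · intro i _
    fin_cases i <;> simp <;> linarith
  · rw [Fin.sum_univ_three]
    simp only [Matrix.cons_val_zero, Matrix.cons_val_one, Matrix.head_cons, Matrix.cons_val_two,
      Matrix.tail_cons]
    ring
  · intro i _
    fin_cases i <;>
      · apply subset_convexHull
        simp

lemma hull_sub_le {S : Set Pt} {g : Pt} {cst : ℝ} (h : ∀ p ∈ S, dd g p ≤ cst) :
    convexHull ℝ S ⊆ {p : Pt | dd g p ≤ cst} :=
  convexHull_min h (convex_le g cst)

lemma hull_sub_ge {S : Set Pt} {g : Pt} {cst : ℝ} (h : ∀ p ∈ S, cst ≤ dd g p) :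
    convexHull ℝ S ⊆ {p : Pt | cst ≤ dd g p} :=
  convexHull_min h (convex_ge g cst)

lemma hull_le_max {fs : Finset Pt} {g : Pt} {cst : ℝ} (h : ∀ y ∈ fs, dd g y ≤ cst) :
    ∀ z ∈ convexHull ℝ (fs : Set Pt), dd g z ≤ cst := by
  intro z hz
  exact hull_sub_le (fun p hp => h p (by exact_mod_cast hp)) hz

lemma argmax_unique {fs : Finset Pt} {g : Pt} {x : Pt} (hx : x ∈ fs)
    (h : ∀ y ∈ fs, y ≠ x → dd g y < dd g x) :
    ∀ z ∈ convexHull ℝ (fs : Set Pt), dd g z = dd g x → z = x := by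
  intro z hz hze
  rw [Finset.convexHull_eq] at hz
  obtain ⟨wt, hw0, hw1, hwz⟩ := hz
  have hcm : z = ∑ y ∈ fs, wt y • y := by
    rw [← hwz, Finset.centerMass_eq_of_sum_1 _ _ hw1]
    simp
  have hdz : dd g z = ∑ y ∈ fs, wt y * dd g y := by
    rw [hcm]
    rw [show dd g (∑ y ∈ fs, wt y • y) = ddL g (∑ y ∈ fs, wt y • y) from rfl]
    rw [map_sum]
    congr 1; funext y
    simp [dd_smul_right]
  have hle : ∀ y ∈ fs, dd g y ≤ dd g x := by
    intro y hy
    by_cases hxy : y = x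
    · rw [hxy]
    · exact le_of_lt (h y hy hxy)
  have key : ∑ y ∈ fs, wt y * (dd g x - dd g y) = 0 := by
    have : ∑ y ∈ fs, wt y * (dd g x - dd g y)
        = (∑ y ∈ fs, wt y) * dd g x - ∑ y ∈ fs, wt y * dd g y := by
      rw [Finset.sum_mul, ← Finset.sum_sub_distrib]
      congr 1; funext y; ring
    rw [this, hw1, ← hdz, hze]; ring
  have hterm := (Finset.sum_eq_zero_iff_of_nonneg (fun y hy =>
    mul_nonneg (hw0 y hy) (sub_nonneg.2 (hle y hy)))).1 key
  have hwy : ∀ y ∈ fs, y ≠ x → wt y = 0 := by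
    intro y hy hyx
    have := hterm y hy
    rcases mul_eq_zero.1 this with h' | h'
    · exact h'
    · exfalso; have := h y hy hyx; nlinarith
  have hwx : wt x = 1 := by
    rw [← hw1]
    exact (Finset.sum_eq_single_of_mem x hx (fun y hy hyx => hwy y hy hyx)).symm
  rw [hcm, Finset.sum_eq_single_of_mem x hx (fun y hy hyx => by rw [hwy y hy hyx, zero_smul]),
    hwx, one_smul]

lemma mem_epts {fs : Finset Pt} {g : Pt} {x : Pt} (hx : x ∈ fs)
    (h : ∀ y ∈ fs, y ≠ x → dd g y < dd g x) :
    x ∈ Set.extremePoints ℝ (convexHull ℝ (fs : Set Pt)) := by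
  constructor
  · exact subset_convexHull ℝ _ (by exact_mod_cast hx)
  · intro x1 hx1 x2 hx2 hseg
    obtain ⟨a, b, ha, hb, hab, hsum⟩ := hseg
    have hle : ∀ y ∈ fs, dd g y ≤ dd g x := by
      intro y hy
      by_cases hxy : y = x
      · rw [hxy]
      · exact le_of_lt (h y hy hxy)
    have m1 : dd g x1 ≤ dd g x := hull_le_max hle x1 hx1
    have m2 : dd g x2 ≤ dd g x := hull_le_max hle x2 hx2
    have hsplit : a * dd g x1 + b * dd g x2 = dd g x := by
      rw [← hsum, dd_comb]
    have h3 : a * dd g x + b * dd g x = dd g x := by rw [← add_mul, hab, one_mul]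
    have e1 : dd g x1 = dd g x := by
      by_contra hne
      have hlt : dd g x1 < dd g x := lt_of_le_of_ne m1 hne
      nlinarith [mul_lt_mul_of_pos_left hlt ha, mul_le_mul_of_nonneg_left m2 hb.le]
    have e2 : dd g x2 = dd g x := by
      by_contra hne
      have hlt : dd g x2 < dd g x := lt_of_le_of_ne m2 hne
      nlinarith [mul_lt_mul_of_pos_left hlt hb, mul_le_mul_of_nonneg_left m1 ha.le]
    exact argmax_unique hx h x1 hx1 e1

/-! ### parallelogram and triangle vertex sets -/

noncomputable instance : DecidableEq Pt := Classical.decEq _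

def Vpar (b v w : Pt) : Finset Pt := {b, b + v, b + w, b + v + w}

lemma Vpar_coe (b v w : Pt) :
    (Vpar b v w : Set Pt) = {b, b + v, b + w, b + v + w} := by simp [Vpar]

lemma v_ne_zero {v w : Pt} (hD : dd v w ≠ 0) : v ≠ 0 := by
  rintro rfl; simp at hD

lemma w_ne_zero {v w : Pt} (hD : dd v w ≠ 0) : w ≠ 0 := by
  rintro rfl; simp at hD

lemma vw_ne {v w : Pt} (hD : dd v w ≠ 0) : v ≠ w := by
  rintro rfl; simp at hD

lemma vw_sum_ne_zero {v w : Pt} (hD : dd v w ≠ 0) : v + w ≠ 0 := by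
  intro h
  have : w = -v := by
    have := congrArg (fun z => z - v) h
    simpa [add_comm, add_sub_cancel_left] using this
  rw [this] at hD
  simp [dd] at hD
  apply hD; ring

lemma epts_par {b v w : Pt} (hD : 0 < dd v w) :
    Set.extremePoints ℝ (convexHull ℝ (Vpar b v w : Set Pt)) = (Vpar b v w : Set Pt) := by
  apply subset_antisymm (extremePoints_convexHull_subset)
  have hD2 : 0 < v 0 * w 1 - v 1 * w 0 := hD
  have mem4 : ∀ y ∈ Vpar b v w, y = b ∨ y = b + v ∨ y = b + w ∨ y = b + v + w := by
    intro y hy; simpa [Vpar] using hy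
  intro x hx
  rcases mem4 x hx with rfl | rfl | rfl | rfl
  · apply mem_epts (g := w - v) hx
    intro y hy hyx
    rcases mem4 y hy with rfl | rfl | rfl | rfl
    · exact absurd rfl hyx
    all_goals (simp [dd]; nlinarith)
  · apply mem_epts (g := -(v + w)) hx
    intro y hy hyx
    rcases mem4 y hy with rfl | rfl | rfl | rfl
    · simp [dd]; nlinarith
    · exact absurd rfl hyx
    all_goals (simp [dd]; nlinarith)
  · apply mem_epts (g := v + w) hx
    intro y hy hyx
    rcases mem4 y hy with rfl | rfl | rfl | rfl
    · simp [dd]; nlinarith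
    · simp [dd]; nlinarith
    · exact absurd rfl hyx
    · simp [dd]; nlinarith
  · apply mem_epts (g := v - w) hx
    intro y hy hyx
    rcases mem4 y hy with rfl | rfl | rfl | rfl
    · simp [dd]; nlinarith
    · simp [dd]; nlinarith
    · simp [dd]; nlinarith
    · exact absurd rfl hyx

lemma par_card {b v w : Pt} (hD : 0 < dd v w) : (Vpar b v w).card = 4 := by
  have hv := v_ne_zero (ne_of_gt hD)
  have hw := w_ne_zero (ne_of_gt hD)
  have hvw := vw_ne (ne_of_gt hD)
  have hvws := vw_sum_ne_zero (ne_of_gt hD)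
  have h1 : b ≠ b + v := fun h => hv (left_eq_add.1 h)
  have h2 : b ≠ b + w := fun h => hw (left_eq_add.1 h)
  have h3 : b ≠ b + v + w := fun h => hvws (left_eq_add.1 (by rwa [add_assoc] at h))
  have h4 : b + v ≠ b + w := fun h => hvw (add_right_injective b h)
  have h5 : b + v ≠ b + v + w := fun h => hw (left_eq_add.1 h)
  have h6 : b + w ≠ b + v + w := fun h => by
    have : w = v + w := add_right_injective b (by rwa [add_assoc] at h)
    exact hv (by have := congrArg (fun z => z - w) this; simpa using this.symm)
  rw [Vpar]
  rw [Finset.card_insert_of_notMem (by simp [h1, h2, h3]),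
    Finset.card_insert_of_notMem (by simp [h4, h5]),
    Finset.card_insert_of_notMem (by simp [h6])]
  simp

/-! ### translation images and polygon identification -/

lemma par_sum {b v w : Pt} (hD : 0 < dd v w) :
    (Vpar b v w).sum id = (4:ℝ) • b + (2:ℝ) • v + (2:ℝ) • w := by
  have hv := v_ne_zero (ne_of_gt hD)
  have hw := w_ne_zero (ne_of_gt hD)
  have hvw := vw_ne (ne_of_gt hD)
  have hvws := vw_sum_ne_zero (ne_of_gt hD)
  have h1 : b ≠ b + v := fun h => hv (left_eq_add.1 h)
  have h2 : b ≠ b + w := fun h => hw (left_eq_add.1 h)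
  have h3 : b ≠ b + v + w := fun h => hvws (left_eq_add.1 (by rwa [add_assoc] at h))
  have h4 : b + v ≠ b + w := fun h => hvw (add_right_injective b h)
  have h5 : b + v ≠ b + v + w := fun h => hw (left_eq_add.1 h)
  have h6 : b + w ≠ b + v + w := fun h => by
    have : w = v + w := add_right_injective b (by rwa [add_assoc] at h)
    exact hv (by have := congrArg (fun z => z - w) this; simpa using this.symm)
  rw [Vpar]
  rw [Finset.sum_insert (by simp [h1, h2, h3]),
    Finset.sum_insert (by simp [h4, h5]),
    Finset.sum_insert (by simp [h6]), Finset.sum_singleton]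
  simp only [id]
  module

/-- two parallelograms with equal hulls: relation between their data -/
lemma par_eq_par {b v w b' v' w' : Pt} (hD : 0 < dd v w) (hD' : 0 < dd v' w')
    (h : convexHull ℝ (Vpar b v w : Set Pt) = convexHull ℝ (Vpar b' v' w' : Set Pt)) :
    (4:ℝ) • b + (2:ℝ) • v + (2:ℝ) • w = (4:ℝ) • b' + (2:ℝ) • v' + (2:ℝ) • w' := by
  have he : (Vpar b v w : Set Pt) = (Vpar b' v' w' : Set Pt) := by
    rw [← epts_par hD, ← epts_par hD', h]
  have hf : Vpar b v w = Vpar b' v' w' := Finset.coe_inj.1 he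
  rw [← par_sum hD, ← par_sum hD', hf]

/-- a parallelogram hull is never a hull of ≤ 3 points -/
lemma par_ne_tri {b v w x y z : Pt} (hD : 0 < dd v w)
    (h : convexHull ℝ (Vpar b v w : Set Pt) = convexHull ℝ ({x, y, z} : Set Pt)) : False := by
  have he : (Vpar b v w : Set Pt) ⊆ ({x, y, z} : Set Pt) := by
    rw [← epts_par hD, h]
    exact extremePoints_convexHull_subset
  have hsub : Vpar b v w ⊆ ({x, y, z} : Finset Pt) := by
    intro p hp
    have := he (by exact_mod_cast hp)
    simpa using this
  have hc := Finset.card_le_card hsub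
  rw [par_card hD] at hc
  have : ({x, y, z} : Finset Pt).card ≤ 3 :=
    le_trans (Finset.card_insert_le _ _) (by
      have := Finset.card_insert_le y ({z} : Finset Pt)
      simp at this ⊢
      omega)
  omega

/-! ### generic sector machinery -/

/-- base point of cell (k, m) in the sector spanned by (v, w) -/
def Bp (v w : Pt) (k m : ℕ) : Pt := (m : ℝ) • v + (k : ℝ) • w

def Vup (b v w : Pt) : Finset Pt := {b, b + v, b + w}
def Vdn (b v w : Pt) : Finset Pt := {b + v, b + w, b + v + w}
def VTa (b v w : Pt) : Finset Pt := {b, b + v, b + v + w}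
def VTb (b v w : Pt) : Finset Pt := {b, b + w, b + v + w}

lemma Vup_sub (b v w : Pt) : (Vup b v w : Set Pt) ⊆ (Vpar b v w : Set Pt) := by
  intro p hp; simp [Vup] at hp; rcases hp with rfl|rfl|rfl <;> simp [Vpar]
lemma Vdn_sub (b v w : Pt) : (Vdn b v w : Set Pt) ⊆ (Vpar b v w : Set Pt) := by
  intro p hp; simp [Vdn] at hp; rcases hp with rfl|rfl|rfl <;> simp [Vpar]
lemma VTa_sub (b v w : Pt) : (VTa b v w : Set Pt) ⊆ (Vpar b v w : Set Pt) := by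
  intro p hp; simp [VTa] at hp; rcases hp with rfl|rfl|rfl <;> simp [Vpar]
lemma VTb_sub (b v w : Pt) : (VTb b v w : Set Pt) ⊆ (Vpar b v w : Set Pt) := by
  intro p hp; simp [VTb] at hp; rcases hp with rfl|rfl|rfl <;> simp [Vpar]

def cellHull (v w : Pt) (k m : ℕ) : Set Pt := convexHull ℝ (Vpar (Bp v w k m) v w : Set Pt)

lemma vert_form {v w : Pt} (k m : ℕ) :
    ∀ p ∈ (Vpar (Bp v w k m) v w : Set Pt), ∃ e d : ℝ, (e = 0 ∨ e = 1) ∧ (d = 0 ∨ d = 1) ∧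
      p = ((m : ℝ) + e) • v + ((k : ℝ) + d) • w := by
  intro p hp
  rw [Vpar_coe] at hp
  rcases hp with rfl|rfl|rfl|rfl
  · exact ⟨0, 0, Or.inl rfl, Or.inl rfl, by rw [Bp]; module⟩
  · exact ⟨1, 0, Or.inr rfl, Or.inl rfl, by rw [Bp]; module⟩
  · exact ⟨0, 1, Or.inl rfl, Or.inr rfl, by rw [Bp]; module⟩
  · exact ⟨1, 1, Or.inr rfl, Or.inr rfl, by rw [Bp]; module⟩

lemma dd_neg_left (w p : Pt) : dd (-w) p = dd p w := by simp [dd]; ring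

lemma cone_convex (v w : Pt) : Convex ℝ (cone v w) := by
  have h : cone v w = {p | 0 ≤ dd (-w) p} ∩ {p | 0 ≤ dd v p} := by
    ext p; simp [cone, dd_neg_left]
  rw [h]
  exact (convex_ge _ 0).inter (convex_ge _ 0)

lemma cell_sub_cone {v w : Pt} (hD : 0 ≤ dd v w) (k m : ℕ) :
    cellHull v w k m ⊆ cone v w := by
  apply convexHull_min _ (cone_convex v w)
  intro p hp
  obtain ⟨e, d, he, hd, rfl⟩ := vert_form k m p hp
  have h1 : (0:ℝ) ≤ (m : ℝ) + e := by rcases he with rfl|rfl <;> positivity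
  have h2 : (0:ℝ) ≤ (k : ℝ) + d := by rcases hd with rfl|rfl <;> positivity
  exact mem_cone_comb hD h1 h2

lemma ddnw_v (v w : Pt) : dd (-w) v = dd v w := by simp [dd]; ring
lemma ddnw_w (w : Pt) : dd (-w) w = 0 := by simp [dd]; ring
lemma ddv_v (v : Pt) : dd v v = 0 := dd_self v

lemma cell_sub_m_le {v w : Pt} (hD : 0 < dd v w) (k m : ℕ) :
    cellHull v w k m ⊆ {p : Pt | dd (-w) p ≤ ((m:ℝ) + 1) * dd v w} := by
  apply hull_sub_le
  intro p hp
  obtain ⟨e, d, he, hd, rfl⟩ := vert_form k m p hp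
  rw [dd_comb, ddnw_v, ddnw_w]
  rcases he with rfl|rfl <;> rcases hd with rfl|rfl <;> nlinarith

lemma cell_sub_m_ge {v w : Pt} (hD : 0 < dd v w) (k m : ℕ) :
    cellHull v w k m ⊆ {p : Pt | (m:ℝ) * dd v w ≤ dd (-w) p} := by
  apply hull_sub_ge
  intro p hp
  obtain ⟨e, d, he, hd, rfl⟩ := vert_form k m p hp
  rw [dd_comb, ddnw_v, ddnw_w]
  rcases he with rfl|rfl <;> rcases hd with rfl|rfl <;> nlinarith

lemma cell_sub_k_le {v w : Pt} (hD : 0 < dd v w) (k m : ℕ) :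
    cellHull v w k m ⊆ {p : Pt | dd v p ≤ ((k:ℝ) + 1) * dd v w} := by
  apply hull_sub_le
  intro p hp
  obtain ⟨e, d, he, hd, rfl⟩ := vert_form k m p hp
  rw [dd_comb, ddv_v]
  rcases he with rfl|rfl <;> rcases hd with rfl|rfl <;> nlinarith

lemma cell_sub_k_ge {v w : Pt} (hD : 0 < dd v w) (k m : ℕ) :
    cellHull v w k m ⊆ {p : Pt | (k:ℝ) * dd v w ≤ dd v p} := by
  apply hull_sub_ge
  intro p hp
  obtain ⟨e, d, he, hd, rfl⟩ := vert_form k m p hp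
  rw [dd_comb, ddv_v]
  rcases he with rfl|rfl <;> rcases hd with rfl|rfl <;> nlinarith

/-- interiors of different cells in the same sector are disjoint -/
lemma cells_int_disjoint {v w : Pt} (hD : 0 < dd v w) {k m k' m' : ℕ}
    (hne : ¬ (k = k' ∧ m = m')) :
    interior (cellHull v w k m) ∩ interior (cellHull v w k' m') = ∅ := by
  have hw' : (-w : Pt) ≠ 0 := by
    have := w_ne_zero (ne_of_gt hD); simpa using this
  have hv' : (v : Pt) ≠ 0 := v_ne_zero (ne_of_gt hD)
  rcases Nat.lt_or_ge m m' with hm | hm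
  · apply int_disjoint hw' (((m:ℝ) + 1) * dd v w) (cell_sub_m_le hD k m)
    intro p hp
    have := cell_sub_m_ge hD k' m' hp
    simp only [Set.mem_setOf_eq] at this ⊢
    have hcast : ((m:ℝ) + 1) ≤ (m' : ℝ) := by exact_mod_cast hm
    nlinarith
  rcases Nat.lt_or_ge m' m with hm' | hm'
  · rw [Set.inter_comm]
    apply int_disjoint hw' (((m':ℝ) + 1) * dd v w) (cell_sub_m_le hD k' m')
    intro p hp
    have := cell_sub_m_ge hD k m hp
    simp only [Set.mem_setOf_eq] at this ⊢
    have hcast : ((m':ℝ) + 1) ≤ (m : ℝ) := by exact_mod_cast hm'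
    nlinarith
  have hmm : m = m' := le_antisymm hm' hm
  subst hmm
  rcases Nat.lt_or_ge k k' with hk | hk
  · apply int_disjoint hv' (((k:ℝ) + 1) * dd v w) (cell_sub_k_le hD k m)
    intro p hp
    have := cell_sub_k_ge hD k' m hp
    simp only [Set.mem_setOf_eq] at this ⊢
    have hcast : ((k:ℝ) + 1) ≤ (k' : ℝ) := by exact_mod_cast hk
    nlinarith
  rcases Nat.lt_or_ge k' k with hk' | hk'
  · rw [Set.inter_comm]
    apply int_disjoint hv' (((k':ℝ) + 1) * dd v w) (cell_sub_k_le hD k' m)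
    intro p hp
    have := cell_sub_k_ge hD k m hp
    simp only [Set.mem_setOf_eq] at this ⊢
    have hcast : ((k':ℝ) + 1) ≤ (k : ℝ) := by exact_mod_cast hk'
    nlinarith
  exact absurd ⟨le_antisymm hk' hk, rfl⟩ hne

/-- within-cell separation: 60-degree triangle pair -/
lemma updn_int_disjoint {v w : Pt} (hD : 0 < dd v w) (k m : ℕ) :
    interior (convexHull ℝ (Vup (Bp v w k m) v w : Set Pt)) ∩
      interior (convexHull ℝ (Vdn (Bp v w k m) v w : Set Pt)) = ∅ := by
  have hg : (v - w : Pt) ≠ 0 := by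
    apply dd_ne_zero_left (p := w)
    have : dd (v - w) w = dd v w := by simp [dd]; ring
    rw [this]; exact ne_of_gt hD
  have hvv : dd (v - w) v = dd v w := by simp [dd]; ring
  have hvw : dd (v - w) w = dd v w := by simp [dd]; ring
  apply int_disjoint hg (((m:ℝ) + (k:ℝ) + 1) * dd v w)
  · apply hull_sub_le
    intro p hp
    simp only [Vup, Finset.coe_insert, Finset.coe_singleton, Set.mem_insert_iff,
      Set.mem_singleton_iff] at hp
    rcases hp with rfl|rfl|rfl <;>
      simp only [Bp, dd_add_right, dd_smul_right, hvv, hvw] <;> nlinarith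
  · apply hull_sub_ge
    intro p hp
    simp only [Vdn, Finset.coe_insert, Finset.coe_singleton, Set.mem_insert_iff,
      Set.mem_singleton_iff] at hp
    rcases hp with rfl|rfl|rfl <;>
      simp only [Bp, dd_add_right, dd_smul_right, hvv, hvw] <;> nlinarith

/-- within-cell separation: 120-degree triangle pair -/
lemma tab_int_disjoint {v w : Pt} (hD : 0 < dd v w) (k m : ℕ) :
    interior (convexHull ℝ (VTa (Bp v w k m) v w : Set Pt)) ∩
      interior (convexHull ℝ (VTb (Bp v w k m) v w : Set Pt)) = ∅ := by
  have hg : (v + w : Pt) ≠ 0 := vw_sum_ne_zero (ne_of_gt hD)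
  have hvv : dd (v + w) v = - dd v w := by simp [dd]; ring
  have hvw : dd (v + w) w = dd v w := by simp [dd]; ring
  apply int_disjoint hg (((k:ℝ) - (m:ℝ)) * dd v w)
  · apply hull_sub_le
    intro p hp
    simp only [VTa, Finset.coe_insert, Finset.coe_singleton, Set.mem_insert_iff,
      Set.mem_singleton_iff] at hp
    rcases hp with rfl|rfl|rfl <;>
      simp only [Bp, dd_add_right, dd_smul_right, hvv, hvw] <;> nlinarith
  · apply hull_sub_ge
    intro p hp
    simp only [VTb, Finset.coe_insert, Finset.coe_singleton, Set.mem_insert_iff,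
      Set.mem_singleton_iff] at hp
    rcases hp with rfl|rfl|rfl <;>
      simp only [Bp, dd_add_right, dd_smul_right, hvv, hvw] <;> nlinarith

/-- every point of the cone lies in some cell, with normalized coordinates -/
lemma cell_cover {v w : Pt} (hD : 0 < dd v w) {p : Pt} (hp : p ∈ cone v w) :
    ∃ k m : ℕ, ∃ a b : ℝ, 0 ≤ a ∧ a ≤ 1 ∧ 0 ≤ b ∧ b ≤ 1 ∧
      p = Bp v w k m + a • v + b • w := by
  set al := dd p w / dd v w with hal
  set be := dd v p / dd v w with hbe
  have hal0 : 0 ≤ al := by have := hp.1; positivity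
  have hbe0 : 0 ≤ be := by have := hp.2; positivity
  set m := ⌊al⌋₊
  set k := ⌊be⌋₊
  refine ⟨k, m, al - (m:ℝ), be - (k:ℝ), ?_, ?_, ?_, ?_, ?_⟩
  · have := Nat.floor_le hal0; linarith
  · have := Nat.lt_floor_add_one al; linarith
  · have := Nat.floor_le hbe0; linarith
  · have := Nat.lt_floor_add_one be; linarith
  · have hexp : p = al • v + be • w := cone_expand (ne_of_gt hD)
    rw [Bp]
    calc p = al • v + be • w := hexp
    _ = (m:ℝ) • v + (k:ℝ) • w + (al - (m:ℝ)) • v + (be - (k:ℝ)) • w := by module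

/-- membership in cell parallelogram hull -/
lemma mem_cell_par {v w b p : Pt} {a c : ℝ} (ha : 0 ≤ a) (ha1 : a ≤ 1) (hc : 0 ≤ c)
    (hc1 : c ≤ 1) (hp : p = b + a • v + c • w) :
    p ∈ convexHull ℝ (Vpar b v w : Set Pt) := by
  rcases le_or_gt (a + c) 1 with h | h
  · apply convexHull_mono (show ({b, b + v, b + w} : Set Pt) ⊆ (Vpar b v w : Set Pt) by
      intro z hz; rw [Vpar_coe]; rcases hz with rfl|rfl|rfl
      · exact Or.inl rfl
      · exact Or.inr (Or.inl rfl)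
      · exact Or.inr (Or.inr (Or.inl rfl)))
    exact mem_hull_tri ha hc h hp
  · apply convexHull_mono (show ({b + v + w, b + v + w + -v, b + v + w + -w} : Set Pt)
        ⊆ (Vpar b v w : Set Pt) by
      intro z hz; rw [Vpar_coe]; rcases hz with rfl|rfl|rfl
      · exact Or.inr (Or.inr (Or.inr rfl))
      · refine Or.inr (Or.inr (Or.inl ?_)); module
      · refine Or.inr (Or.inl ?_); module)
    apply mem_hull_tri (a := 1 - a) (b := 1 - c) (by linarith) (by linarith) (by linarith)
    rw [hp]; module

/-- membership in one of the two triangles of a 60-degree cell -/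
lemma mem_cell_updn {v w b p : Pt} {a c : ℝ} (ha : 0 ≤ a) (ha1 : a ≤ 1) (hc : 0 ≤ c)
    (hc1 : c ≤ 1) (hp : p = b + a • v + c • w) :
    p ∈ convexHull ℝ (Vup b v w : Set Pt) ∨ p ∈ convexHull ℝ (Vdn b v w : Set Pt) := by
  rcases le_or_gt (a + c) 1 with h | h
  · left
    have hcoe : (Vup b v w : Set Pt) = {b, b + v, b + w} := by simp [Vup]
    rw [hcoe]
    exact mem_hull_tri ha hc h hp
  · right
    have hsub : ({b + v + w, b + v + w + -v, b + v + w + -w} : Set Pt) ⊆ (Vdn b v w : Set Pt) := by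
      intro z hz
      have hcoe : (Vdn b v w : Set Pt) = {b + v, b + w, b + v + w} := by simp [Vdn]
      rw [hcoe]; rcases hz with rfl|rfl|rfl
      · exact Or.inr (Or.inr rfl)
      · refine Or.inr (Or.inl ?_); module
      · refine Or.inl ?_; module
    apply convexHull_mono hsub
    apply mem_hull_tri (a := 1 - a) (b := 1 - c) (by linarith) (by linarith) (by linarith)
    rw [hp]; module

/-- membership in one of the two triangles of a 120-degree cell -/
lemma mem_cell_tab {v w b p : Pt} {a c : ℝ} (ha : 0 ≤ a) (ha1 : a ≤ 1) (hc : 0 ≤ c)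
    (hc1 : c ≤ 1) (hp : p = b + a • v + c • w) :
    p ∈ convexHull ℝ (VTa b v w : Set Pt) ∨ p ∈ convexHull ℝ (VTb b v w : Set Pt) := by
  rcases le_or_gt c a with h | h
  · left
    have hsub : ({b, b + v, b + (v + w)} : Set Pt) ⊆ (VTa b v w : Set Pt) := by
      intro z hz
      have hcoe : (VTa b v w : Set Pt) = {b, b + v, b + v + w} := by simp [VTa]
      rw [hcoe]; rcases hz with rfl|rfl|rfl
      · exact Or.inl rfl
      · exact Or.inr (Or.inl rfl)
      · refine Or.inr (Or.inr ?_); module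
    apply convexHull_mono hsub
    apply mem_hull_tri (a := a - c) (b := c) (by linarith) hc (by linarith)
    rw [hp]; module
  · right
    have hsub : ({b, b + (v + w), b + w} : Set Pt) ⊆ (VTb b v w : Set Pt) := by
      intro z hz
      have hcoe : (VTb b v w : Set Pt) = {b, b + w, b + v + w} := by simp [VTb]
      rw [hcoe]; rcases hz with rfl|rfl|rfl
      · exact Or.inl rfl
      · refine Or.inr (Or.inr ?_); module
      · exact Or.inr (Or.inl rfl)
    apply convexHull_mono hsub
    apply mem_hull_tri (a := a) (b := c - a) ha (by linarith) (by linarith)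
    rw [hp]; module

/-! ### the four-sector construction, parameterized by c = cos θ, s = sin θ -/

def hh : ℝ := Real.sqrt 3 / 2

lemma hh_pos : 0 < hh := by
  rw [hh]; positivity

lemma hh_sq : hh ^ 2 = 3 / 4 := by
  rw [hh, div_pow, Real.sq_sqrt (by norm_num : (0:ℝ) ≤ 3)]
  norm_num

def r0 : Pt := pt 1 0
def r1 (c s : ℝ) : Pt := pt c s
def r2 (c s : ℝ) : Pt := pt (c / 2 - s * hh) (s / 2 + c * hh)
def r3 : Pt := pt (-(1 / 2)) (-hh)

section CS

variable {c s : ℝ}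

lemma dd01 : dd r0 (r1 c s) = s := by simp [dd, r0, r1]

lemma dd12 (pyth : c ^ 2 + s ^ 2 = 1) : dd (r1 c s) (r2 c s) = hh := by
  simp only [dd, r1, r2, pt_app0, pt_app1]
  linear_combination hh * pyth

lemma dd23 (pyth : c ^ 2 + s ^ 2 = 1) : dd (r2 c s) r3 = s := by
  simp only [dd, r2, r3, pt_app0, pt_app1]
  linear_combination s * hh_sq + (3/4 : ℝ) * (s * pyth) - (3/4:ℝ) * (s * pyth)

lemma dd30 : dd r3 r0 = hh := by simp [dd, r3, r0]

lemma dd02 : dd r0 (r2 c s) = s / 2 + c * hh := by simp [dd, r0, r2]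

lemma dd13 : dd (r1 c s) r3 = s / 2 - c * hh := by simp [dd, r1, r3]; ring

lemma dd03 : dd r0 r3 = -hh := by simp [dd, r0, r3]

end CS

inductive Fam | f1 | f2u | f2d | f3 | f4a | f4b
deriving DecidableEq

instance : Fintype Fam := ⟨{.f1, .f2u, .f2d, .f3, .f4a, .f4b}, fun x => by cases x <;> simp⟩

/-- first spanning vector of the sector of a family -/
def sv (c s : ℝ) : Fam → Pt
  | .f1 => r0
  | .f2u => r1 c s
  | .f2d => r1 c s
  | .f3 => r2 c s
  | .f4a => r3
  | .f4b => r3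

/-- second spanning vector of the sector of a family -/
def sw (c s : ℝ) : Fam → Pt
  | .f1 => r1 c s
  | .f2u => r2 c s
  | .f2d => r2 c s
  | .f3 => r3
  | .f4a => r0
  | .f4b => r0

/-- the sector index of a family -/
def sec : Fam → Fin 4
  | .f1 => 0
  | .f2u => 1
  | .f2d => 1
  | .f3 => 2
  | .f4a => 3
  | .f4b => 3

def vset (c s : ℝ) : Fam → ℕ → ℕ → Finset Pt
  | .f1, k, m => Vpar (Bp r0 (r1 c s) k m) r0 (r1 c s)
  | .f2u, k, m => Vup (Bp (r1 c s) (r2 c s) k m) (r1 c s) (r2 c s)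
  | .f2d, k, m => Vdn (Bp (r1 c s) (r2 c s) k m) (r1 c s) (r2 c s)
  | .f3, k, m => Vpar (Bp (r2 c s) r3 k m) (r2 c s) r3
  | .f4a, k, m => VTa (Bp r3 r0 k m) r3 r0
  | .f4b, k, m => VTb (Bp r3 r0 k m) r3 r0

/-- the tiles -/
def tl (c s : ℝ) (f : Fam) (k m : ℕ) : Set Pt := convexHull ℝ (vset c s f k m : Set Pt)

/-- the tiling -/
def TS (c s : ℝ) : Set (Set Pt) :=
  Set.range (fun x : Fam × ℕ × ℕ => tl c s x.1 x.2.1 x.2.2)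

lemma TS_countable (c s : ℝ) : (TS c s).Countable := Set.countable_range _

section CS2

variable {c s : ℝ} (pyth : c ^ 2 + s ^ 2 = 1) (hs : 0 < s)

include pyth hs

/-- determinant of each sector basis is positive -/
lemma dsec_pos (f : Fam) : 0 < dd (sv c s f) (sw c s f) := by
  cases f
  · simp only [sv, sw]; rw [dd01]; exact hs
  · simp only [sv, sw]; rw [dd12 pyth]; exact hh_pos
  · simp only [sv, sw]; rw [dd12 pyth]; exact hh_pos
  · simp only [sv, sw]; rw [dd23 pyth]; exact hs
  · simp only [sv, sw]; rw [dd30]; exact hh_pos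
  · simp only [sv, sw]; rw [dd30]; exact hh_pos

omit pyth hs in
lemma vset_sub_cell (f : Fam) (k m : ℕ) :
    (vset c s f k m : Set Pt) ⊆ (Vpar (Bp (sv c s f) (sw c s f) k m) (sv c s f) (sw c s f) : Set Pt) := by
  cases f
  · exact subset_rfl
  · exact Vup_sub _ _ _
  · exact Vdn_sub _ _ _
  · exact subset_rfl
  · exact VTa_sub _ _ _
  · exact VTb_sub _ _ _

omit pyth hs in
lemma tl_sub_cell (f : Fam) (k m : ℕ) :
    tl c s f k m ⊆ cellHull (sv c s f) (sw c s f) k m :=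
  convexHull_mono (vset_sub_cell f k m)

lemma tl_sub_cone (f : Fam) (k m : ℕ) :
    tl c s f k m ⊆ cone (sv c s f) (sw c s f) :=
  subset_trans (tl_sub_cell f k m) (cell_sub_cone (le_of_lt (dsec_pos pyth hs f)) k m)

omit pyth hs in
/-- the cone of a sector is contained in a closed half plane determined by the
    shared boundary ray with the previous/next sector -/
lemma cone_sub_le_fst (v w : Pt) : cone v w ⊆ {p : Pt | dd w p ≤ 0} := by
  intro p hp
  have h := hp.1
  have : dd w p = - dd p w := dd_swap p w
  simp only [Set.mem_setOf_eq, this]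
  linarith

omit pyth hs in
lemma cone_sub_ge_fst (v w : Pt) : cone v w ⊆ {p : Pt | 0 ≤ dd v p} := fun _ hp => hp.2

end CS2

section CS3

variable {c s : ℝ} (pyth : c ^ 2 + s ^ 2 = 1) (hs : 0 < s)

def qv (c s : ℝ) : Fin 4 → Pt := ![r0, r1 c s, r2 c s, r3]
def qw (c s : ℝ) : Fin 4 → Pt := ![r1 c s, r2 c s, r3, r0]

lemma sv_eq (f : Fam) : sv c s f = qv c s (sec f) := by cases f <;> rfl
lemma sw_eq (f : Fam) : sw c s f = qw c s (sec f) := by cases f <;> rfl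

lemma dd_neg (g p : Pt) : dd (-g) p = -(dd g p) := by simp [dd]; ring

lemma r0_ne : (r0 : Pt) ≠ 0 := by
  intro h
  have := congrArg (fun z : Pt => z 0) h
  simp [r0] at this

lemma r3_ne : (r3 : Pt) ≠ 0 := by
  intro h
  have := congrArg (fun z : Pt => z 1) h
  simp [r3] at this
  exact (ne_of_gt hh_pos) this

include hs in
lemma r1_ne : (r1 c s : Pt) ≠ 0 := by
  intro h
  have := congrArg (fun z : Pt => z 1) h
  simp [r1] at this
  exact (ne_of_gt hs) this

include pyth hs in
lemma r2_ne : (r2 c s : Pt) ≠ 0 :=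
  dd_ne_zero_left (p := r3) (by rw [dd23 pyth]; exact ne_of_gt hs)

/-- the separating vector gP in case 0 ≤ s/2 + c·hh -/
def gP (c s : ℝ) : Pt := pt (s * hh - c / 2) (-(s / 2) - c * hh)

/-- the separating vector gQ in case s/2 + c·hh ≤ 0 -/
def gQ : Pt := pt (1 / 2) hh

lemma ddgP0 : dd (gP c s) r0 = s / 2 + c * hh := by simp [dd, gP, r0]; ring

include pyth in
lemma ddgP1 : dd (gP c s) (r1 c s) = hh := by
  simp only [dd, gP, r1, pt_app0, pt_app1]
  linear_combination hh * pyth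

lemma ddgP2 : dd (gP c s) (r2 c s) = 0 := by
  simp only [dd, gP, r2, pt_app0, pt_app1]
  ring

include pyth in
lemma ddgP3 : dd (gP c s) r3 = -s := by
  simp only [dd, gP, r3, pt_app0, pt_app1]
  linear_combination (-s) * hh_sq - (1/4 : ℝ) * s * pyth + (1/4:ℝ) * s * pyth

lemma ddgQ0 : dd gQ r0 = -hh := by simp [dd, gQ, r0]

lemma ddgQ1 : dd gQ (r1 c s) = s / 2 - c * hh := by simp [dd, gQ, r1]; ring

include pyth in
lemma ddgQ2 : dd gQ (r2 c s) = s := by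
  simp only [dd, gQ, r2, pt_app0, pt_app1]
  linear_combination s * hh_sq

lemma ddgQ3 : dd gQ r3 = 0 := by simp [dd, gQ, r3]; ring

include pyth hs in
lemma gP_ne : (gP c s : Pt) ≠ 0 :=
  dd_ne_zero_left (p := r1 c s) (by rw [ddgP1 pyth]; exact ne_of_gt hh_pos)

include pyth hs in
lemma gQ_ne : (gQ : Pt) ≠ 0 :=
  dd_ne_zero_left (p := r2 c s) (by rw [ddgQ2 pyth]; exact ne_of_gt hs)

include pyth hs in
/-- separation of distinct sector cones -/
lemma sec_sep (i j : Fin 4) (hij : i ≠ j) :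
    ∃ g : Pt, g ≠ 0 ∧ cone (qv c s i) (qw c s i) ⊆ {p : Pt | dd g p ≤ 0} ∧
      cone (qv c s j) (qw c s j) ⊆ {p : Pt | 0 ≤ dd g p} := by
  have hD0 : 0 < dd (qv c s 0) (qw c s 0) := by simp only [qv, qw]; simp only [Matrix.cons_val_zero]; rw [dd01]; exact hs
  have hD1 : 0 < dd (qv c s 1) (qw c s 1) := by
    show 0 < dd (r1 c s) (r2 c s); rw [dd12 pyth]; exact hh_pos
  have hD2 : 0 < dd (qv c s 2) (qw c s 2) := by
    show 0 < dd (r2 c s) r3; rw [dd23 pyth]; exact hs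
  have hD3 : 0 < dd (qv c s 3) (qw c s 3) := by
    show 0 < dd r3 r0; rw [dd30]; exact hh_pos
  have hneg : ∀ (g : Pt) (t u : Set Pt), t ⊆ {p : Pt | dd g p ≤ 0} →
      u ⊆ {p : Pt | 0 ≤ dd g p} → g ≠ 0 →
      ∃ g' : Pt, g' ≠ 0 ∧ u ⊆ {p : Pt | dd g' p ≤ 0} ∧ t ⊆ {p : Pt | 0 ≤ dd g' p} := by
    intro g t u ht hu hg
    refine ⟨-g, by simpa using hg, ?_, ?_⟩
    · intro p hp; have := hu hp; simp only [Set.mem_setOf_eq, dd_neg] at this ⊢; linarith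
    · intro p hp; have := ht hp; simp only [Set.mem_setOf_eq, dd_neg] at this ⊢; linarith
  -- adjacent helper
  have hadj : ∀ i' : Fin 4, cone (qv c s i') (qw c s i') ⊆ {p : Pt | dd (qw c s i') p ≤ 0} :=
    fun i' => cone_sub_le_fst _ _
  have hadj' : ∀ i' : Fin 4, cone (qv c s i') (qw c s i') ⊆ {p : Pt | 0 ≤ dd (qv c s i') p} :=
    fun i' => cone_sub_ge_fst _ _
  have hr1ne := r1_ne (c := c) hs
  have hr2ne := r2_ne pyth hs
  -- the two non-adjacent separations
  have hsep02 : ∃ g : Pt, g ≠ 0 ∧ cone (qv c s 2) (qw c s 2) ⊆ {p : Pt | dd g p ≤ 0} ∧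
      cone (qv c s 0) (qw c s 0) ⊆ {p : Pt | 0 ≤ dd g p} := by
    rcases le_or_gt 0 (s / 2 + c * hh) with hP | hP
    · refine ⟨gP c s, gP_ne pyth hs, ?_, ?_⟩
      · exact cone_sub_le hD2 (by rw [show qv c s 2 = r2 c s from rfl, ddgP2]) 
          (by rw [show qw c s 2 = r3 from rfl, ddgP3 pyth]; linarith)
      · exact cone_sub_ge hD0 (by rw [show qv c s 0 = r0 from rfl, ddgP0]; linarith)
          (by rw [show qw c s 0 = r1 c s from rfl, ddgP1 pyth]; exact le_of_lt hh_pos)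
    · refine ⟨r0, r0_ne, ?_, ?_⟩
      · exact cone_sub_le hD2 (by rw [show qv c s 2 = r2 c s from rfl, dd02]; linarith)
          (by rw [show qw c s 2 = r3 from rfl, dd03]; linarith [hh_pos])
      · exact cone_sub_ge hD0 (by rw [show qv c s 0 = r0 from rfl, dd_self]) 
          (by rw [show qw c s 0 = r1 c s from rfl, dd01]; exact le_of_lt hs)
  have hsep31 : ∃ g : Pt, g ≠ 0 ∧ cone (qv c s 3) (qw c s 3) ⊆ {p : Pt | dd g p ≤ 0} ∧
      cone (qv c s 1) (qw c s 1) ⊆ {p : Pt | 0 ≤ dd g p} := by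
    rcases le_or_gt 0 (s / 2 + c * hh) with hP | hP
    · refine ⟨r0, r0_ne, ?_, ?_⟩
      · exact cone_sub_le hD3 (by rw [show qv c s 3 = r3 from rfl]; rw [show dd r0 r3 = -hh from dd03]; linarith [hh_pos])
          (by rw [show qw c s 3 = r0 from rfl, dd_self])
      · exact cone_sub_ge hD1 (by rw [show qv c s 1 = r1 c s from rfl, dd01]; exact le_of_lt hs)
          (by rw [show qw c s 1 = r2 c s from rfl, dd02]; linarith)
    · refine ⟨gQ, gQ_ne pyth hs, ?_, ?_⟩
      · exact cone_sub_le hD3 (by rw [show qv c s 3 = r3 from rfl, ddgQ3])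
          (by rw [show qw c s 3 = r0 from rfl, ddgQ0]; linarith [hh_pos])
      · exact cone_sub_ge hD1 (by rw [show qv c s 1 = r1 c s from rfl, ddgQ1]; nlinarith [hh_pos])
          (by rw [show qw c s 1 = r2 c s from rfl, ddgQ2 pyth]; exact le_of_lt hs)
  obtain ⟨g02, hg02, h02a, h02b⟩ := hsep02
  obtain ⟨g31, hg31, h31a, h31b⟩ := hsep31
  fin_cases i <;> fin_cases j
  · exact absurd rfl hij
  · exact ⟨r1 c s, hr1ne, hadj 0, hadj' 1⟩
  · exact hneg g02 _ _ h02a h02b hg02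
  · exact hneg r0 _ _ (hadj 3) (hadj' 0) r0_ne
  · exact hneg (r1 c s) _ _ (hadj 0) (hadj' 1) hr1ne
  · exact absurd rfl hij
  · exact ⟨r2 c s, hr2ne, hadj 1, hadj' 2⟩
  · exact hneg g31 _ _ h31a h31b hg31
  · exact ⟨g02, hg02, h02a, h02b⟩
  · exact hneg (r2 c s) _ _ (hadj 1) (hadj' 2) hr2ne
  · exact absurd rfl hij
  · exact ⟨r3, r3_ne, hadj 2, hadj' 3⟩
  · exact ⟨r0, r0_ne, hadj 3, hadj' 0⟩
  · exact ⟨g31, hg31, h31a, h31b⟩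
  · exact hneg r3 _ _ (hadj 2) (hadj' 3) r3_ne
  · exact absurd rfl hij

end CS3

section CS4

variable {c s : ℝ} (pyth : c ^ 2 + s ^ 2 = 1) (hs : 0 < s)

lemma int_disj_mono {A B t u : Set Pt} (ht : t ⊆ A) (hu : u ⊆ B)
    (h : interior A ∩ interior B = ∅) : interior t ∩ interior u = ∅ := by
  rw [← Set.subset_empty_iff, ← h]
  exact Set.inter_subset_inter (interior_mono ht) (interior_mono hu)

lemma sv_sec (f g : Fam) (h : sec f = sec g) :
    sv c s f = sv c s g ∧ sw c s f = sw c s g := by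
  cases f <;> cases g <;> first
    | exact ⟨rfl, rfl⟩
    | exact absurd h (by decide)

include pyth hs in
/-- master disjointness lemma -/
lemma tiles_disjoint (f g : Fam) (k m k' m' : ℕ) (hne : ¬(f = g ∧ k = k' ∧ m = m')) :
    interior (tl c s f k m) ∩ interior (tl c s g k' m') = ∅ := by
  by_cases hsec : sec f = sec g
  · obtain ⟨hv, hw⟩ := sv_sec (c := c) (s := s) f g hsec
    by_cases hcell : k = k' ∧ m = m'
    · obtain ⟨rfl, rfl⟩ := hcell
      have hfg : f ≠ g := fun h => hne ⟨h, rfl, rfl⟩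
      have hD12 : 0 < dd (r1 c s) (r2 c s) := by rw [dd12 pyth]; exact hh_pos
      have hD30 : 0 < dd (r3 : Pt) r0 := by rw [dd30]; exact hh_pos
      cases f <;> cases g <;>
        first
          | exact absurd rfl hfg
          | exact absurd hsec (by decide)
          | exact updn_int_disjoint hD12 k m
          | exact (by rw [Set.inter_comm]; exact updn_int_disjoint hD12 k m)
          | exact tab_int_disjoint hD30 k m
          | exact (by rw [Set.inter_comm]; exact tab_int_disjoint hD30 k m)
    · apply int_disj_mono (tl_sub_cell f k m) (tl_sub_cell g k' m')
      rw [hv, hw]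
      exact cells_int_disjoint (dsec_pos pyth hs g) hcell
  · obtain ⟨gg, hgg, hle, hge⟩ := sec_sep pyth hs (sec f) (sec g) hsec
    apply int_disjoint hgg 0
    · refine subset_trans (tl_sub_cone pyth hs f k m) ?_
      rw [sv_eq, sw_eq]; exact hle
    · refine subset_trans (tl_sub_cone pyth hs g k' m') ?_
      rw [sv_eq, sw_eq]; exact hge

omit pyth hs in
lemma relB : ((s / 2 - c * hh) • r0 + hh • (r1 c s)) + s • r3 = 0 := by
  apply pt_ext <;> simp [r0, r1, r3] <;> ring

include pyth in
omit hs in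
lemma relA : (s • (r1 c s) + (hh * c - s / 2) • (r2 c s)) + hh • r3 = 0 := by
  apply pt_ext <;> simp only [add_app, smul_app, zero_app, r1, r2, r3, pt_app0, pt_app1]
  · linear_combination (-(s*c)) * hh_sq + (hh/2) * pyth
  · linear_combination (c^2 - 1) * hh_sq + (3/4 : ℝ) * pyth

include pyth hs in
/-- every point lies in one of the four sector cones -/
lemma sector_select (p : Pt) : ∃ i : Fin 4, p ∈ cone (qv c s i) (qw c s i) := by
  have hswap : ∀ q : Pt, dd p q = - dd q p := fun q => dd_swap q p
  have hDA : s * dd (r1 c s) p + (hh * c - s / 2) * dd (r2 c s) p + hh * dd r3 p = 0 := by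
    have h := congrArg (fun z : Pt => dd z p) (relA pyth)
    simpa [dd_add_left, dd_smul_left] using h
  have hDB : (s / 2 - c * hh) * dd r0 p + hh * dd (r1 c s) p + s * dd r3 p = 0 := by
    have h := congrArg (fun z : Pt => dd z p) (relB (c := c) (s := s))
    simpa [dd_add_left, dd_smul_left] using h
  by_cases h1 : dd (r1 c s) p ≤ 0
  · by_cases h0 : 0 ≤ dd r0 p
    · refine ⟨0, ?_, h0⟩
      show 0 ≤ dd p (r1 c s)
      rw [hswap (r1 c s)]; linarith
    · push_neg at h0
      by_cases h3 : 0 ≤ dd r3 p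
      · refine ⟨3, ?_, h3⟩
        show 0 ≤ dd p r0
        rw [hswap r0]; linarith
      · push_neg at h3
        by_cases h2 : 0 ≤ dd (r2 c s) p
        · refine ⟨2, ?_, h2⟩
          show 0 ≤ dd p r3
          rw [hswap r3]; linarith
        · push_neg at h2
          exfalso
          rcases le_or_gt 0 (hh * c - s / 2) with hc' | hc'
          · nlinarith [hh_pos]
          · nlinarith [hh_pos]
  · push_neg at h1
    by_cases h2 : dd (r2 c s) p ≤ 0
    · refine ⟨1, ?_, le_of_lt h1⟩
      show 0 ≤ dd p (r2 c s)
      rw [hswap (r2 c s)]; linarith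
    · push_neg at h2
      by_cases h3 : dd r3 p ≤ 0
      · refine ⟨2, ?_, le_of_lt h2⟩
        show 0 ≤ dd p r3
        rw [hswap r3]; linarith
      · push_neg at h3
        by_cases h0 : dd r0 p ≤ 0
        · refine ⟨3, ?_, le_of_lt h3⟩
          show 0 ≤ dd p r0
          rw [hswap r0]; linarith
        · push_neg at h0
          exfalso
          rcases le_or_gt 0 (hh * c - s / 2) with hc' | hc'
          · nlinarith [hh_pos]
          · nlinarith [hh_pos]

include pyth hs in
/-- the tiles cover the plane -/
lemma TS_cover (p : Pt) : ∃ f : Fam, ∃ k m : ℕ, p ∈ tl c s f k m := by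
  obtain ⟨i, hi⟩ := sector_select pyth hs p
  fin_cases i
  · have hD : 0 < dd (qv c s 0) (qw c s 0) := by
      show 0 < dd r0 (r1 c s); rw [dd01]; exact hs
    obtain ⟨k, m, a, b, ha, ha1, hb, hb1, hp⟩ := cell_cover hD hi
    exact ⟨.f1, k, m, mem_cell_par ha ha1 hb hb1 hp⟩
  · have hD : 0 < dd (qv c s 1) (qw c s 1) := by
      show 0 < dd (r1 c s) (r2 c s); rw [dd12 pyth]; exact hh_pos
    obtain ⟨k, m, a, b, ha, ha1, hb, hb1, hp⟩ := cell_cover hD hi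
    rcases mem_cell_updn ha ha1 hb hb1 hp with h | h
    · exact ⟨.f2u, k, m, h⟩
    · exact ⟨.f2d, k, m, h⟩
  · have hD : 0 < dd (qv c s 2) (qw c s 2) := by
      show 0 < dd (r2 c s) r3; rw [dd23 pyth]; exact hs
    obtain ⟨k, m, a, b, ha, ha1, hb, hb1, hp⟩ := cell_cover hD hi
    exact ⟨.f3, k, m, mem_cell_par ha ha1 hb hb1 hp⟩
  · have hD : 0 < dd (qv c s 3) (qw c s 3) := by
      show 0 < dd r3 r0; rw [dd30]; exact hh_pos
    obtain ⟨k, m, a, b, ha, ha1, hb, hb1, hp⟩ := cell_cover hD hi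
    rcases mem_cell_tab ha ha1 hb hb1 hp with h | h
    · exact ⟨.f4a, k, m, h⟩
    · exact ⟨.f4b, k, m, h⟩

end CS4

/-! ### isometries: translations and reflections -/

/-- translation isometry -/
def trIso (q : Pt) : Pt ≃ᵢ Pt where
  toFun x := x + q
  invFun x := x - q
  left_inv x := by module
  right_inv x := by module
  isometry_toFun := Isometry.of_dist_eq fun x y => by
    rw [dist_add_right]

@[simp] lemma trIso_apply (q x : Pt) : trIso q x = x + q := rfl

/-- reflection isometry about the line of direction angle φ/2 where (a,b) = (cos φ, sin φ) -/
def reflIso (a b : ℝ) (hab : a ^ 2 + b ^ 2 = 1) : Pt ≃ᵢ Pt where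
  toFun x := pt (a * x 0 + b * x 1) (b * x 0 - a * x 1)
  invFun x := pt (a * x 0 + b * x 1) (b * x 0 - a * x 1)
  left_inv x := by
    apply pt_ext <;> simp only [pt_app0, pt_app1]
    · linear_combination (x 0) * hab
    · linear_combination (x 1) * hab
  right_inv x := by
    apply pt_ext <;> simp only [pt_app0, pt_app1]
    · linear_combination (x 0) * hab
    · linear_combination (x 1) * hab
  isometry_toFun := Isometry.of_dist_eq fun x y => by
    rw [EuclideanSpace.dist_eq, EuclideanSpace.dist_eq]
    congr 1
    rw [Fin.sum_univ_two, Fin.sum_univ_two]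
    simp only [pt_app0, pt_app1, Real.dist_eq, sq_abs]
    linear_combination ((x 0 - y 0) ^ 2 + (x 1 - y 1) ^ 2) * hab

@[simp] lemma reflIso_apply (a b : ℝ) (hab : a ^ 2 + b ^ 2 = 1) (x : Pt) :
    reflIso a b hab x = pt (a * x 0 + b * x 1) (b * x 0 - a * x 1) := rfl

/-- any isometry maps hulls to hulls of images -/
lemma isom_image_hull (f : Pt ≃ᵢ Pt) (S : Set Pt) :
    f '' (convexHull ℝ S) = convexHull ℝ (f '' S) := by
  have hco : (f.toRealAffineIsometryEquiv.toAffineEquiv.toAffineMap : Pt → Pt) = ⇑f := by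
    funext x
    simp
  calc f '' (convexHull ℝ S)
      = (f.toRealAffineIsometryEquiv.toAffineEquiv.toAffineMap : Pt → Pt) '' (convexHull ℝ S) := by
        rw [hco]
    _ = convexHull ℝ ((f.toRealAffineIsometryEquiv.toAffineEquiv.toAffineMap : Pt → Pt) '' S) :=
        AffineMap.image_convexHull _ _
    _ = convexHull ℝ (f '' S) := by rw [hco]

/-! ### prototype identification of the tiles -/

/-- the third vertex of the unit triangle -/
def dT : Pt := pt (1 / 2) hh

/-- the unit rhombus, in (c,s) form -/
def uRcs (c s : ℝ) : Set Pt := convexHull ℝ ({0, r0, r1 c s, r0 + r1 c s} : Set Pt)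

lemma uT_eq : uT = convexHull ℝ ({0, r0, dT} : Set Pt) := by
  rw [uT, pt_zero]; rfl

lemma uR_eq (θ : ℝ) : uR θ = uRcs (Real.cos θ) (Real.sin θ) := by
  have h4 : pt (1 + Real.cos θ) (Real.sin θ) = r0 + r1 (Real.cos θ) (Real.sin θ) := by
    apply pt_ext <;> simp [r0, r1]
  rw [uR, uRcs, pt_zero, h4]; rfl

section Proto

variable {c s : ℝ} (pyth : c ^ 2 + s ^ 2 = 1) (hs : 0 < s)

include pyth in
lemma hab2 : (c / 2 - s * hh) ^ 2 + (s / 2 + c * hh) ^ 2 = 1 := by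
  linear_combination ((1:ℝ)/4 + hh^2) * pyth + hh_sq

include pyth in
lemma hab2' : (-(c / 2 - s * hh)) ^ 2 + (-(s / 2 + c * hh)) ^ 2 = 1 := by
  linear_combination ((1:ℝ)/4 + hh^2) * pyth + hh_sq

lemma hab4 : (1 / 2 : ℝ) ^ 2 + (-hh) ^ 2 = 1 := by
  linear_combination hh_sq

lemma hab5 : (1 : ℝ) ^ 2 + (0 : ℝ) ^ 2 = 1 := by norm_num

/-- reflection M2 sends the triangle directions (0°,60°) to (θ+60°, θ) -/
lemma M2_0 : reflIso _ _ (hab2 (c := c) (s := s) pyth) 0 = 0 := by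
  apply pt_ext <;> simp

lemma M2_r0 : reflIso _ _ (hab2 (c := c) (s := s) pyth) r0 = r2 c s := by
  apply pt_ext <;> simp [r0, r2]

lemma M2_dT : reflIso _ _ (hab2 (c := c) (s := s) pyth) dT = r1 c s := by
  apply pt_ext <;> simp only [reflIso_apply, pt_app0, pt_app1, dT, r1]
  · linear_combination c * hh_sq
  · linear_combination s * hh_sq

include pyth in
lemma M2_r1 : reflIso _ _ (hab2 (c := c) (s := s) pyth) (r1 c s) = pt (1 / 2) hh := by
  apply pt_ext <;> simp only [reflIso_apply, pt_app0, pt_app1, r1]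
  · linear_combination (1/2 : ℝ) * pyth
  · linear_combination hh * pyth

include pyth in
lemma M2_r01 : reflIso _ _ (hab2 (c := c) (s := s) pyth) (r0 + r1 c s)
    = r2 c s + pt (1 / 2) hh := by
  apply pt_ext <;> simp only [reflIso_apply, pt_app0, pt_app1, r1, r0, r2, add_app]
  · linear_combination (1/2 : ℝ) * pyth
  · linear_combination hh * pyth

lemma M2'_0 : reflIso _ _ (hab2' (c := c) (s := s) pyth) 0 = 0 := by
  apply pt_ext <;> simp

lemma M2'_r0 : reflIso _ _ (hab2' (c := c) (s := s) pyth) r0 = -(r2 c s) := by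
  apply pt_ext <;> simp [r0, r2]

lemma M2'_dT : reflIso _ _ (hab2' (c := c) (s := s) pyth) dT = -(r1 c s) := by
  apply pt_ext <;> simp only [reflIso_apply, pt_app0, pt_app1, dT, r1, neg_app]
  · linear_combination (-c) * hh_sq
  · linear_combination (-s) * hh_sq

lemma ptr30 : pt (1 / 2) (-hh) = r3 + r0 := by
  apply pt_ext <;> simp [r3, r0] <;> norm_num

lemma M4_0 : reflIso _ _ hab4 0 = 0 := by apply pt_ext <;> simp

lemma M4_r0 : reflIso _ _ hab4 r0 = r3 + r0 := by
  apply pt_ext <;> simp [r0, r3] <;> norm_num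

lemma M4_dT : reflIso _ _ hab4 dT = r3 := by
  apply pt_ext <;> simp only [reflIso_apply, pt_app0, pt_app1, dT, r3]
  · linear_combination (-1 : ℝ) * hh_sq
  · ring

lemma M5_0 : reflIso _ _ hab5 0 = 0 := by apply pt_ext <;> simp

lemma M5_r0 : reflIso _ _ hab5 r0 = r0 := by apply pt_ext <;> simp [r0]

lemma M5_dT : reflIso _ _ hab5 dT = r3 + r0 := by
  apply pt_ext <;> simp [dT, r3, r0] <;> norm_num

end Proto

section Proto2

variable {c s : ℝ} (pyth : c ^ 2 + s ^ 2 = 1)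

lemma negr3 : pt (1 / 2) hh = -r3 := by
  apply pt_ext <;> simp [r3] <;> norm_num

include pyth in
/-- every rhombic tile is an isometric copy of the rhombus -/
lemma tl_proto_rh (f : Fam) (hf : f = Fam.f1 ∨ f = Fam.f3) (k m : ℕ) :
    ∃ fI : Pt ≃ᵢ Pt, tl c s f k m = fI '' uRcs c s := by
  rcases hf with rfl | rfl
  case inl =>
    refine ⟨trIso (Bp r0 (r1 c s) k m), ?_⟩
    set b := Bp r0 (r1 c s) k m with hb
    rw [uRcs, isom_image_hull]
    show convexHull ℝ (Vpar b r0 (r1 c s) : Set Pt) = _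
    congr 1
    rw [Set.image_insert_eq, Set.image_insert_eq, Set.image_insert_eq, Set.image_singleton]
    simp only [trIso_apply, zero_add]
    rw [Vpar_coe,
      show r0 + b = b + r0 from by module,
      show r1 c s + b = b + r1 c s from by module,
      show r0 + r1 c s + b = b + r0 + r1 c s from by module]
  case inr =>
    refine ⟨(reflIso _ _ (hab2 (c := c) (s := s) pyth)).trans
      (trIso (Bp (r2 c s) r3 k m + r3)), ?_⟩
    set b := Bp (r2 c s) r3 k m with hb
    rw [uRcs, isom_image_hull]
    show convexHull ℝ (Vpar b (r2 c s) r3 : Set Pt) = _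
    congr 1
    rw [Set.image_insert_eq, Set.image_insert_eq, Set.image_insert_eq, Set.image_singleton]
    simp only [IsometryEquiv.trans_apply, M2_0 pyth, M2_r0 pyth, M2_r1 pyth, M2_r01 pyth,
      trIso_apply, zero_add]
    rw [Vpar_coe, negr3,
      show b + r3 = b + r3 from rfl,
      show r2 c s + (b + r3) = b + r2 c s + r3 from by module,
      show -r3 + (b + r3) = b from by module,
      show r2 c s + -r3 + (b + r3) = b + r2 c s from by module]
    ext z
    simp only [Set.mem_insert_iff, Set.mem_singleton_iff]
    tauto

include pyth in
/-- every triangular tile is an isometric copy of the unit triangle -/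
lemma tl_proto_tri (f : Fam)
    (hf : f = Fam.f2u ∨ f = Fam.f2d ∨ f = Fam.f4a ∨ f = Fam.f4b) (k m : ℕ) :
    ∃ fI : Pt ≃ᵢ Pt, tl c s f k m = fI '' uT := by
  rcases hf with rfl | rfl | rfl | rfl
  case inl =>
    refine ⟨(reflIso _ _ (hab2 (c := c) (s := s) pyth)).trans
      (trIso (Bp (r1 c s) (r2 c s) k m)), ?_⟩
    set b := Bp (r1 c s) (r2 c s) k m with hb
    rw [uT_eq, isom_image_hull]
    show convexHull ℝ (Vup b (r1 c s) (r2 c s) : Set Pt) = _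
    congr 1
    rw [Set.image_insert_eq, Set.image_insert_eq, Set.image_singleton]
    simp only [IsometryEquiv.trans_apply, M2_0 pyth, M2_r0 pyth, M2_dT pyth, trIso_apply,
      zero_add]
    rw [show (Vup b (r1 c s) (r2 c s) : Set Pt) = {b, b + r1 c s, b + r2 c s} from by simp [Vup],
      show r2 c s + b = b + r2 c s from by module,
      show r1 c s + b = b + r1 c s from by module]
    ext z
    simp only [Set.mem_insert_iff, Set.mem_singleton_iff]
    tauto
  case inr.inl =>
    refine ⟨(reflIso _ _ (hab2' (c := c) (s := s) pyth)).trans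
      (trIso (Bp (r1 c s) (r2 c s) k m + r1 c s + r2 c s)), ?_⟩
    set b := Bp (r1 c s) (r2 c s) k m with hb
    rw [uT_eq, isom_image_hull]
    show convexHull ℝ (Vdn b (r1 c s) (r2 c s) : Set Pt) = _
    congr 1
    rw [Set.image_insert_eq, Set.image_insert_eq, Set.image_singleton]
    simp only [IsometryEquiv.trans_apply, M2'_0 pyth, M2'_r0 pyth, M2'_dT pyth, trIso_apply,
      zero_add]
    rw [show (Vdn b (r1 c s) (r2 c s) : Set Pt)
        = {b + r1 c s, b + r2 c s, b + r1 c s + r2 c s} from by simp [Vdn],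
      show -(r2 c s) + (b + r1 c s + r2 c s) = b + r1 c s from by module,
      show -(r1 c s) + (b + r1 c s + r2 c s) = b + r2 c s from by module]
    ext z
    simp only [Set.mem_insert_iff, Set.mem_singleton_iff]
    tauto
  case inr.inr.inl =>
    refine ⟨(reflIso _ _ hab4).trans (trIso (Bp r3 r0 k m)), ?_⟩
    set b := Bp r3 r0 k m with hb
    rw [uT_eq, isom_image_hull]
    show convexHull ℝ (VTa b r3 r0 : Set Pt) = _
    congr 1
    rw [Set.image_insert_eq, Set.image_insert_eq, Set.image_singleton]
    simp only [IsometryEquiv.trans_apply, M4_0, M4_r0, M4_dT, trIso_apply, zero_add]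
    rw [show (VTa b r3 r0 : Set Pt) = {b, b + r3, b + r3 + r0} from by simp [VTa],
      show r3 + r0 + b = b + r3 + r0 from by module,
      show r3 + b = b + r3 from by module]
    ext z
    simp only [Set.mem_insert_iff, Set.mem_singleton_iff]
    tauto
  case inr.inr.inr =>
    refine ⟨(reflIso _ _ hab5).trans (trIso (Bp r3 r0 k m)), ?_⟩
    set b := Bp r3 r0 k m with hb
    rw [uT_eq, isom_image_hull]
    show convexHull ℝ (VTb b r3 r0 : Set Pt) = _
    congr 1
    rw [Set.image_insert_eq, Set.image_insert_eq, Set.image_singleton]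
    simp only [IsometryEquiv.trans_apply, M5_0, M5_r0, M5_dT, trIso_apply, zero_add]
    rw [show (VTb b r3 r0 : Set Pt) = {b, b + r0, b + r3 + r0} from by simp [VTb],
      show r0 + b = b + r0 from by module,
      show r3 + r0 + b = b + r3 + r0 from by module]

end Proto2

/-! ### nonperiodicity -/

lemma Vpar_img (b vv ww u : Pt) :
    (fun x => x + u) '' (Vpar b vv ww : Set Pt) = (Vpar (b + u) vv ww : Set Pt) := by
  rw [Vpar_coe, Vpar_coe, Set.image_insert_eq, Set.image_insert_eq, Set.image_insert_eq,
    Set.image_singleton]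
  rw [show b + vv + u = b + u + vv from by module,
    show b + ww + u = b + u + ww from by module,
    show b + vv + ww + u = b + u + vv + ww from by module]

lemma tl_mem_TS (c s : ℝ) (f : Fam) (k m : ℕ) : tl c s f k m ∈ TS c s :=
  ⟨(f, k, m), rfl⟩

lemma TS_mem {c s : ℝ} {t : Set Pt} (ht : t ∈ TS c s) : ∃ f k m, t = tl c s f k m := by
  obtain ⟨⟨f, k, m⟩, rfl⟩ := ht
  exact ⟨f, k, m, rfl⟩

section NPer

variable {c s : ℝ} (pyth : c ^ 2 + s ^ 2 = 1) (hs : 0 < s)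

lemma tri_lit (f : Fam) (hf : f = Fam.f2u ∨ f = Fam.f2d ∨ f = Fam.f4a ∨ f = Fam.f4b)
    (k m : ℕ) : ∃ x y z : Pt, tl c s f k m = convexHull ℝ ({x, y, z} : Set Pt) := by
  rcases hf with rfl | rfl | rfl | rfl
  · exact ⟨_, _, _, by show convexHull ℝ (Vup _ _ _ : Set Pt) = _; rw [show (Vup (Bp (r1 c s) (r2 c s) k m) (r1 c s) (r2 c s) : Set Pt) = {Bp (r1 c s) (r2 c s) k m, Bp (r1 c s) (r2 c s) k m + r1 c s, Bp (r1 c s) (r2 c s) k m + r2 c s} from by simp [Vup]]⟩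
  · exact ⟨_, _, _, by show convexHull ℝ (Vdn _ _ _ : Set Pt) = _; rw [show (Vdn (Bp (r1 c s) (r2 c s) k m) (r1 c s) (r2 c s) : Set Pt) = {Bp (r1 c s) (r2 c s) k m + r1 c s, Bp (r1 c s) (r2 c s) k m + r2 c s, Bp (r1 c s) (r2 c s) k m + r1 c s + r2 c s} from by simp [Vdn]]⟩
  · exact ⟨_, _, _, by show convexHull ℝ (VTa _ _ _ : Set Pt) = _; rw [show (VTa (Bp r3 r0 k m) r3 r0 : Set Pt) = {Bp r3 r0 k m, Bp r3 r0 k m + r3, Bp r3 r0 k m + r3 + r0} from by simp [VTa]]⟩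
  · exact ⟨_, _, _, by show convexHull ℝ (VTb _ _ _ : Set Pt) = _; rw [show (VTb (Bp r3 r0 k m) r3 r0 : Set Pt) = {Bp r3 r0 k m, Bp r3 r0 k m + r0, Bp r3 r0 k m + r3 + r0} from by simp [VTb]]⟩

include pyth hs in
/-- the translate of a rhombic tile by a tiling-symmetry is a rhombic tile -/
lemma rh_trans {u : Pt} (hu : ∀ t ∈ TS c s, (fun x => x + u) '' t ∈ TS c s)
    (f : Fam) (hf : f = Fam.f1 ∨ f = Fam.f3) (k m : ℕ) :
    ∃ (f' : Fam) (k' m' : ℕ), (f' = Fam.f1 ∨ f' = Fam.f3) ∧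
      (fun x => x + u) '' tl c s f k m = tl c s f' k' m' := by
  have hD01 : 0 < dd r0 (r1 c s) := by rw [dd01]; exact hs
  have hD23 : 0 < dd (r2 c s) r3 := by rw [dd23 pyth]; exact hs
  have hmem := hu _ (tl_mem_TS c s f k m)
  obtain ⟨f', k', m', heq⟩ := TS_mem hmem
  refine ⟨f', k', m', ?_, heq⟩
  -- the image is a parallelogram hull
  have himg : ∃ (b : Pt) (vv ww : Pt), 0 < dd vv ww ∧
      (fun x => x + u) '' tl c s f k m = convexHull ℝ (Vpar b vv ww : Set Pt) := by
    rcases hf with rfl | rfl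
    · refine ⟨Bp r0 (r1 c s) k m + u, r0, r1 c s, hD01, ?_⟩
      show (fun x => x + u) '' convexHull ℝ (Vpar (Bp r0 (r1 c s) k m) r0 (r1 c s) : Set Pt) = _
      rw [show (fun x : Pt => x + u) = ⇑(trIso u) from rfl, isom_image_hull,
        show ⇑(trIso u) = (fun x : Pt => x + u) from rfl, Vpar_img]
    · refine ⟨Bp (r2 c s) r3 k m + u, r2 c s, r3, hD23, ?_⟩
      show (fun x => x + u) '' convexHull ℝ (Vpar (Bp (r2 c s) r3 k m) (r2 c s) r3 : Set Pt) = _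
      rw [show (fun x : Pt => x + u) = ⇑(trIso u) from rfl, isom_image_hull,
        show ⇑(trIso u) = (fun x : Pt => x + u) from rfl, Vpar_img]
  obtain ⟨b, vv, ww, hD, himg⟩ := himg
  by_contra hnot
  push_neg at hnot
  have htri : f' = Fam.f2u ∨ f' = Fam.f2d ∨ f' = Fam.f4a ∨ f' = Fam.f4b := by
    cases f' <;> simp_all
  obtain ⟨x, y, z, hxyz⟩ := tri_lit (c := c) (s := s) f' htri k' m'
  exact par_ne_tri hD (by rw [← himg, heq, hxyz])

include pyth hs in
/-- the translate of a triangular tile by a tiling-symmetry is a triangular tile -/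
lemma tri_trans {u : Pt} (hu : ∀ t ∈ TS c s, (fun x => x + u) '' t ∈ TS c s)
    (f : Fam) (hf : f = Fam.f2u ∨ f = Fam.f2d ∨ f = Fam.f4a ∨ f = Fam.f4b) (k m : ℕ) :
    ∃ (f' : Fam) (k' m' : ℕ), (f' = Fam.f2u ∨ f' = Fam.f2d ∨ f' = Fam.f4a ∨ f' = Fam.f4b) ∧
      (fun x => x + u) '' tl c s f k m = tl c s f' k' m' := by
  have hD01 : 0 < dd r0 (r1 c s) := by rw [dd01]; exact hs
  have hD23 : 0 < dd (r2 c s) r3 := by rw [dd23 pyth]; exact hs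
  have hmem := hu _ (tl_mem_TS c s f k m)
  obtain ⟨f', k', m', heq⟩ := TS_mem hmem
  refine ⟨f', k', m', ?_, heq⟩
  obtain ⟨x, y, z, hxyz⟩ := tri_lit (c := c) (s := s) f hf k m
  have himg : (fun x => x + u) '' tl c s f k m
      = convexHull ℝ ({x + u, y + u, z + u} : Set Pt) := by
    rw [hxyz, show (fun x : Pt => x + u) = ⇑(trIso u) from rfl, isom_image_hull]
    congr 1
    rw [Set.image_insert_eq, Set.image_insert_eq, Set.image_singleton]
    rfl
  by_contra hnot
  push_neg at hnot
  have hpar : f' = Fam.f1 ∨ f' = Fam.f3 := by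
    cases f' <;> simp_all
  rcases hpar with rfl | rfl
  · exact par_ne_tri hD01 (by rw [show convexHull ℝ (Vpar (Bp r0 (r1 c s) k' m') r0 (r1 c s) : Set Pt) = tl c s Fam.f1 k' m' from rfl, ← heq, himg])
  · exact par_ne_tri hD23 (by rw [show convexHull ℝ (Vpar (Bp (r2 c s) r3 k' m') (r2 c s) r3 : Set Pt) = tl c s Fam.f3 k' m' from rfl, ← heq, himg])

/-- the rhombic region -/
def RRs (c s : ℝ) : Set Pt := cone r0 (r1 c s) ∪ cone (r2 c s) r3

/-- the triangular region -/
def TTs (c s : ℝ) : Set Pt := cone (r1 c s) (r2 c s) ∪ cone r3 r0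

include pyth hs in
lemma rh_cover {p : Pt} (hp : p ∈ RRs c s) :
    ∃ (f : Fam) (k m : ℕ), (f = Fam.f1 ∨ f = Fam.f3) ∧ p ∈ tl c s f k m := by
  rcases hp with hp | hp
  · have hD : 0 < dd r0 (r1 c s) := by rw [dd01]; exact hs
    obtain ⟨k, m, a, b, ha, ha1, hb, hb1, hpe⟩ := cell_cover hD hp
    exact ⟨Fam.f1, k, m, Or.inl rfl, mem_cell_par ha ha1 hb hb1 hpe⟩
  · have hD : 0 < dd (r2 c s) r3 := by rw [dd23 pyth]; exact hs
    obtain ⟨k, m, a, b, ha, ha1, hb, hb1, hpe⟩ := cell_cover hD hp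
    exact ⟨Fam.f3, k, m, Or.inr rfl, mem_cell_par ha ha1 hb hb1 hpe⟩

include pyth hs in
lemma tri_cover {p : Pt} (hp : p ∈ TTs c s) :
    ∃ (f : Fam) (k m : ℕ),
      (f = Fam.f2u ∨ f = Fam.f2d ∨ f = Fam.f4a ∨ f = Fam.f4b) ∧ p ∈ tl c s f k m := by
  rcases hp with hp | hp
  · have hD : 0 < dd (r1 c s) (r2 c s) := by rw [dd12 pyth]; exact hh_pos
    obtain ⟨k, m, a, b, ha, ha1, hb, hb1, hpe⟩ := cell_cover hD hp
    rcases mem_cell_updn ha ha1 hb hb1 hpe with h | h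
    · exact ⟨Fam.f2u, k, m, by tauto, h⟩
    · exact ⟨Fam.f2d, k, m, by tauto, h⟩
  · have hD : 0 < dd (r3 : Pt) r0 := by rw [dd30]; exact hh_pos
    obtain ⟨k, m, a, b, ha, ha1, hb, hb1, hpe⟩ := cell_cover hD hp
    rcases mem_cell_tab ha ha1 hb hb1 hpe with h | h
    · exact ⟨Fam.f4a, k, m, by tauto, h⟩
    · exact ⟨Fam.f4b, k, m, by tauto, h⟩

include pyth hs in
lemma rh_tl_sub {f : Fam} (hf : f = Fam.f1 ∨ f = Fam.f3) (k m : ℕ) :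
    tl c s f k m ⊆ RRs c s := by
  rcases hf with rfl | rfl
  · exact subset_trans (tl_sub_cone pyth hs Fam.f1 k m) (Set.subset_union_left)
  · exact subset_trans (tl_sub_cone pyth hs Fam.f3 k m) (Set.subset_union_right)

include pyth hs in
lemma tri_tl_sub {f : Fam} (hf : f = Fam.f2u ∨ f = Fam.f2d ∨ f = Fam.f4a ∨ f = Fam.f4b)
    (k m : ℕ) : tl c s f k m ⊆ TTs c s := by
  rcases hf with rfl | rfl | rfl | rfl
  · exact subset_trans (tl_sub_cone pyth hs Fam.f2u k m) (Set.subset_union_left)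
  · exact subset_trans (tl_sub_cone pyth hs Fam.f2d k m) (Set.subset_union_left)
  · exact subset_trans (tl_sub_cone pyth hs Fam.f4a k m) (Set.subset_union_right)
  · exact subset_trans (tl_sub_cone pyth hs Fam.f4b k m) (Set.subset_union_right)

include pyth hs in
lemma RR_inv {u : Pt} (hu : ∀ t ∈ TS c s, (fun x => x + u) '' t ∈ TS c s) :
    ∀ p ∈ RRs c s, p + u ∈ RRs c s := by
  intro p hp
  obtain ⟨f, k, m, hf, hmem⟩ := rh_cover pyth hs hp
  obtain ⟨f', k', m', hf', heq⟩ := rh_trans pyth hs hu f hf k m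
  have : p + u ∈ (fun x => x + u) '' tl c s f k m := Set.mem_image_of_mem _ hmem
  rw [heq] at this
  exact rh_tl_sub pyth hs hf' k' m' this

include pyth hs in
lemma TT_inv {u : Pt} (hu : ∀ t ∈ TS c s, (fun x => x + u) '' t ∈ TS c s) :
    ∀ p ∈ TTs c s, p + u ∈ TTs c s := by
  intro p hp
  obtain ⟨f, k, m, hf, hmem⟩ := tri_cover pyth hs hp
  obtain ⟨f', k', m', hf', heq⟩ := tri_trans pyth hs hu f hf k m
  have : p + u ∈ (fun x => x + u) '' tl c s f k m := Set.mem_image_of_mem _ hmem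
  rw [heq] at this
  exact tri_tl_sub pyth hs hf' k' m' this

end NPer

section Final

variable {c s : ℝ} (pyth : c ^ 2 + s ^ 2 = 1) (hs : 0 < s)

lemma Bp00 (v w : Pt) : Bp v w 0 0 = 0 := by simp [Bp]

include pyth hs in
lemma Pzero (hP : s / 2 + c * hh = 0) : c = -(1/2) ∧ s = hh := by
  have hhs := hh_sq
  have hhp := hh_pos
  have hch : c * hh = -(s/2) := by linarith
  have hsq : c ^ 2 * hh ^ 2 = s ^ 2 / 4 := by nlinarith
  have hc2 : c ^ 2 = 1/4 := by nlinarith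
  have hcneg : c < 0 := by nlinarith
  have hfac : (c + 1/2) * (c - 1/2) = 0 := by nlinarith
  have hc : c = -(1/2) := by
    rcases mul_eq_zero.1 hfac with h | h
    · linarith
    · exfalso; nlinarith
  have hs2 : s ^ 2 = 3/4 := by nlinarith
  have hfac2 : (s - hh) * (s + hh) = 0 := by nlinarith
  have hsh : s = hh := by
    rcases mul_eq_zero.1 hfac2 with h | h
    · linarith
    · exfalso; nlinarith
  exact ⟨hc, hsh⟩

include pyth hs in
lemma Qzero (hQ : s / 2 - c * hh = 0) : c = 1/2 ∧ s = hh := by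
  have hhs := hh_sq
  have hhp := hh_pos
  have hch : c * hh = s/2 := by linarith
  have hsq : c ^ 2 * hh ^ 2 = s ^ 2 / 4 := by nlinarith
  have hc2 : c ^ 2 = 1/4 := by nlinarith
  have hcpos : 0 < c := by nlinarith
  have hfac : (c + 1/2) * (c - 1/2) = 0 := by nlinarith
  have hc : c = 1/2 := by
    rcases mul_eq_zero.1 hfac with h | h
    · exfalso; nlinarith
    · linarith
  have hs2 : s ^ 2 = 3/4 := by nlinarith
  have hfac2 : (s - hh) * (s + hh) = 0 := by nlinarith
  have hsh : s = hh := by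
    rcases mul_eq_zero.1 hfac2 with h | h
    · linarith
    · exfalso; nlinarith
  exact ⟨hc, hsh⟩

include pyth hs in
/-- the image of tile f3(0,0) under the symmetry translation, as a parallelogram hull -/
lemma img_f3 (u : Pt) :
    (fun x => x + u) '' tl c s Fam.f3 0 0
      = convexHull ℝ (Vpar (Bp (r2 c s) r3 0 0 + u) (r2 c s) r3 : Set Pt) := by
  show (fun x => x + u) '' convexHull ℝ (Vpar (Bp (r2 c s) r3 0 0) (r2 c s) r3 : Set Pt) = _
  rw [show (fun x : Pt => x + u) = ⇑(trIso u) from rfl, isom_image_hull,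
    show ⇑(trIso u) = (fun x : Pt => x + u) from rfl, Vpar_img]

include pyth hs in
lemma specP (hP : s / 2 + c * hh = 0) (u : Pt) (a : ℝ) (ha : 0 < a) (hu : u = a • r0)
    (huinv : ∀ t ∈ TS c s, (fun x => x + u) '' t ∈ TS c s) : False := by
  obtain ⟨hc, hsh⟩ := Pzero pyth hs hP
  have hD01 : 0 < dd r0 (r1 c s) := by rw [dd01]; exact hs
  have hD23 : 0 < dd (r2 c s) r3 := by rw [dd23 pyth]; exact hs
  have hhs := hh_sq
  have hhp := hh_pos
  obtain ⟨f', k', m', hf', heq⟩ := rh_trans pyth hs huinv Fam.f3 (Or.inr rfl) 0 0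
  rw [img_f3 pyth hs] at heq
  rcases hf' with rfl | rfl
  · have E := par_eq_par hD23 hD01 (heq :
      convexHull ℝ (Vpar (Bp (r2 c s) r3 0 0 + u) (r2 c s) r3 : Set Pt)
        = convexHull ℝ (Vpar (Bp r0 (r1 c s) k' m') r0 (r1 c s) : Set Pt))
    have E1 := congrArg (fun z : Pt => z 1) E
    simp only [add_app, smul_app, Bp, Bp00, zero_add, hu, r0, r1, r2, r3, pt_app0, pt_app1]
      at E1
    have hk' : (0:ℝ) ≤ (k' : ℝ) := Nat.cast_nonneg k'
    nlinarith [E1]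
  · have E := par_eq_par hD23 hD23 (heq :
      convexHull ℝ (Vpar (Bp (r2 c s) r3 0 0 + u) (r2 c s) r3 : Set Pt)
        = convexHull ℝ (Vpar (Bp (r2 c s) r3 k' m') (r2 c s) r3 : Set Pt))
    have E0 := congrArg (fun z : Pt => z 0) E
    have E1 := congrArg (fun z : Pt => z 1) E
    simp only [add_app, smul_app, Bp, Bp00, zero_add, hu, r0, r1, r2, r3, pt_app0, pt_app1]
      at E0 E1
    have hk' : (0:ℝ) ≤ (k' : ℝ) := Nat.cast_nonneg k'
    have hm' : (0:ℝ) ≤ (m' : ℝ) := Nat.cast_nonneg m'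
    -- from E1 : k' = 0 essentially; from E0 : a = -m' - k'/2 ≤ 0
    rw [hc, hsh] at E0 E1
    nlinarith [E0, E1]

include pyth hs in
lemma specQ (hQ : s / 2 - c * hh = 0) (u : Pt) (a : ℝ) (ha : 0 < a) (hu : u = a • r1 c s)
    (huinv : ∀ t ∈ TS c s, (fun x => x + u) '' t ∈ TS c s) : False := by
  obtain ⟨hc, hsh⟩ := Qzero pyth hs hQ
  have hD01 : 0 < dd r0 (r1 c s) := by rw [dd01]; exact hs
  have hD23 : 0 < dd (r2 c s) r3 := by rw [dd23 pyth]; exact hs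
  have hhs := hh_sq
  have hhp := hh_pos
  obtain ⟨f', k', m', hf', heq⟩ := rh_trans pyth hs huinv Fam.f3 (Or.inr rfl) 0 0
  rw [img_f3 pyth hs] at heq
  rcases hf' with rfl | rfl
  · have E := par_eq_par hD23 hD01 (heq :
      convexHull ℝ (Vpar (Bp (r2 c s) r3 0 0 + u) (r2 c s) r3 : Set Pt)
        = convexHull ℝ (Vpar (Bp r0 (r1 c s) k' m') r0 (r1 c s) : Set Pt))
    have E0 := congrArg (fun z : Pt => z 0) E
    have E1 := congrArg (fun z : Pt => z 1) E
    simp only [add_app, smul_app, Bp, Bp00, zero_add, hu, r0, r1, r2, r3, pt_app0, pt_app1]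
      at E0 E1
    have hk' : (0:ℝ) ≤ (k' : ℝ) := Nat.cast_nonneg k'
    have hm' : (0:ℝ) ≤ (m' : ℝ) := Nat.cast_nonneg m'
    rw [hc, hsh] at E0 E1
    nlinarith [E0, E1]
  · have E := par_eq_par hD23 hD23 (heq :
      convexHull ℝ (Vpar (Bp (r2 c s) r3 0 0 + u) (r2 c s) r3 : Set Pt)
        = convexHull ℝ (Vpar (Bp (r2 c s) r3 k' m') (r2 c s) r3 : Set Pt))
    have E0 := congrArg (fun z : Pt => z 0) E
    have E1 := congrArg (fun z : Pt => z 1) E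
    simp only [add_app, smul_app, Bp, Bp00, zero_add, hu, r0, r1, r2, r3, pt_app0, pt_app1]
      at E0 E1
    have hk' : (0:ℝ) ≤ (k' : ℝ) := Nat.cast_nonneg k'
    have hm' : (0:ℝ) ≤ (m' : ℝ) := Nat.cast_nonneg m'
    rw [hc, hsh] at E0 E1
    nlinarith [E0, E1]

include pyth hs in
lemma ray_cases {p : Pt} (h1 : p ∈ RRs c s) (h2 : p ∈ TTs c s) :
    ∃ t : ℝ, 0 ≤ t ∧
      (p = t • r0 ∨ p = t • r1 c s ∨ p = t • r2 c s ∨ p = t • r3) := by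
  have hD01 : 0 < dd r0 (r1 c s) := by rw [dd01]; exact hs
  have hD23 : 0 < dd (r2 c s) r3 := by rw [dd23 pyth]; exact hs
  rcases h1 with hA | hA <;> rcases h2 with hB | hB
  · -- ray r1
    have hz : dd p (r1 c s) = 0 := by
      have h1' := hA.1
      have h2' := hB.2
      have := dd_swap p (r1 c s)
      linarith
    obtain ⟨t, ht, hp⟩ := cone_ray_w hD01 hA hz
    exact ⟨t, ht, Or.inr (Or.inl hp)⟩
  · -- ray r0
    have hz : dd r0 p = 0 := by
      have h1' := hA.2
      have h2' := hB.1
      have := dd_swap p r0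
      linarith
    obtain ⟨t, ht, hp⟩ := cone_ray_v hD01 hA hz
    exact ⟨t, ht, Or.inl hp⟩
  · -- ray r2
    have hz : dd (r2 c s) p = 0 := by
      have h1' := hA.2
      have h2' := hB.1
      have := dd_swap p (r2 c s)
      linarith
    obtain ⟨t, ht, hp⟩ := cone_ray_v hD23 hA hz
    exact ⟨t, ht, Or.inr (Or.inr (Or.inl hp))⟩
  · -- ray r3
    have hz : dd p r3 = 0 := by
      have h1' := hA.1
      have h2' := hB.2
      have := dd_swap p r3
      linarith
    obtain ⟨t, ht, hp⟩ := cone_ray_w hD23 hA hz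
    exact ⟨t, ht, Or.inr (Or.inr (Or.inr hp))⟩

include pyth hs in
theorem TS_nonperiodic : Nonperiodic (TS c s) := by
  intro v hv hTT
  have hA : ∀ t ∈ TS c s, (fun x => x + v) '' t ∈ TS c s := by
    intro t ht
    rw [← hTT]
    exact Set.mem_image_of_mem _ ht
  have hA' : ∀ t ∈ TS c s, (fun x => x + (-v)) '' t ∈ TS c s := by
    intro t ht
    conv at ht => rw [← hTT]
    obtain ⟨t', ht', rfl⟩ := ht
    have himg : (fun x => x + -v) '' ((fun x => x + v) '' t') = t' := by
      rw [Set.image_image]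
      simp
    rw [himg]; exact ht'
  have h0R : (0 : Pt) ∈ RRs c s := Or.inl (zero_mem_cone _ _)
  have h0T : (0 : Pt) ∈ TTs c s := Or.inl (zero_mem_cone _ _)
  have hvR : v ∈ RRs c s := by
    have := RR_inv pyth hs hA 0 h0R; simpa using this
  have hvT : v ∈ TTs c s := by
    have := TT_inv pyth hs hA 0 h0T; simpa using this
  have hvR' : -v ∈ RRs c s := by
    have := RR_inv pyth hs hA' 0 h0R; simpa using this
  have hvT' : -v ∈ TTs c s := by
    have := TT_inv pyth hs hA' 0 h0T; simpa using this
  obtain ⟨t, ht, hray⟩ := ray_cases pyth hs hvR hvT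
  obtain ⟨t', ht', hray'⟩ := ray_cases pyth hs hvR' hvT'
  have ht0 : 0 < t := by
    rcases lt_or_eq_of_le ht with h | h
    · exact h
    · exfalso
      apply hv
      rcases hray with hpv | hpv | hpv | hpv <;> rw [hpv, ← h, zero_smul]
  have ht0' : 0 < t' := by
    rcases lt_or_eq_of_le ht' with h | h
    · exact h
    · exfalso
      apply hv
      have hz : -v = 0 := by
        rcases hray' with hpv | hpv | hpv | hpv <;> rw [hpv, ← h, zero_smul]
      simpa using congrArg Neg.neg hz
  have hhp := hh_pos
  -- the master equation v + (-v) = 0 along the two rays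
  have key : ∀ (x y : Pt), v = t • x → -v = t' • y →
      ∀ g : Pt, t * dd g x + t' * dd g y = 0 := by
    intro x y hx hy g
    have hsum : t • x + t' • y = 0 := by
      rw [← hx, ← hy]; simp
    have := congrArg (fun z : Pt => dd g z) hsum
    simpa [dd_comb] using this
  rcases hray with hpv | hpv | hpv | hpv <;> rcases hray' with hpv' | hpv' | hpv' | hpv'
  · -- (r0, r0)
    have := key _ _ hpv hpv' r3
    rw [dd30] at this
    nlinarith
  · -- (r0, r1)
    have := key _ _ hpv hpv' r0
    rw [dd_self, dd01] at this
    nlinarith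
  · -- (r0, r2) : exceptional when P = 0
    by_cases hP : s / 2 + c * hh = 0
    · exact specP pyth hs hP v t ht0 hpv hA
    · have := key _ _ hpv hpv' r0
      rw [dd_self, dd02] at this
      have h2 : t' * (s / 2 + c * hh) = 0 := by linarith
      rcases mul_eq_zero.1 h2 with h | h
      · exact absurd h (ne_of_gt ht0')
      · exact hP h
  · -- (r0, r3)
    have := key _ _ hpv hpv' r0
    rw [dd_self, dd03] at this
    nlinarith
  · -- (r1, r0)
    have := key _ _ hpv hpv' r0
    rw [dd_self, dd01] at this
    nlinarith
  · -- (r1, r1)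
    have := key _ _ hpv hpv' r0
    rw [dd01] at this
    nlinarith
  · -- (r1, r2)
    have := key _ _ hpv hpv' (r1 c s)
    rw [dd_self, dd12 pyth] at this
    nlinarith
  · -- (r1, r3) : exceptional when Q = 0
    by_cases hQ : s / 2 - c * hh = 0
    · exact specQ pyth hs hQ v t ht0 hpv hA
    · have := key _ _ hpv hpv' (r1 c s)
      rw [dd_self, dd13] at this
      have h2 : t' * (s / 2 - c * hh) = 0 := by linarith
      rcases mul_eq_zero.1 h2 with h | h
      · exact absurd h (ne_of_gt ht0')
      · exact hQ h
  · -- (r2, r0) : exceptional when P = 0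
    by_cases hP : s / 2 + c * hh = 0
    · exact specP pyth hs hP (-v) t' ht0' hpv' hA'
    · have := key _ _ hpv hpv' r0
      rw [dd_self, dd02] at this
      have h2 : t * (s / 2 + c * hh) = 0 := by linarith
      rcases mul_eq_zero.1 h2 with h | h
      · exact absurd h (ne_of_gt ht0)
      · exact hP h
  · -- (r2, r1)
    have := key _ _ hpv hpv' (r1 c s)
    rw [dd_self, dd12 pyth] at this
    nlinarith
  · -- (r2, r2)
    have := key _ _ hpv hpv' (r1 c s)
    rw [dd12 pyth] at this
    nlinarith
  · -- (r2, r3)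
    have := key _ _ hpv hpv' (r2 c s)
    rw [dd_self, dd23 pyth] at this
    nlinarith
  · -- (r3, r0)
    have := key _ _ hpv hpv' r0
    rw [dd_self, dd03] at this
    nlinarith
  · -- (r3, r1) : exceptional when Q = 0
    by_cases hQ : s / 2 - c * hh = 0
    · exact specQ pyth hs hQ (-v) t' ht0' hpv' hA'
    · have := key _ _ hpv hpv' (r1 c s)
      rw [dd_self, dd13] at this
      have h2 : t * (s / 2 - c * hh) = 0 := by linarith
      rcases mul_eq_zero.1 h2 with h | h
      · exact absurd h (ne_of_gt ht0)
      · exact hQ h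
  · -- (r3, r2)
    have := key _ _ hpv hpv' (r2 c s)
    rw [dd_self, dd23 pyth] at this
    nlinarith
  · -- (r3, r3)
    have := key _ _ hpv hpv' (r2 c s)
    rw [dd23 pyth] at this
    nlinarith

end Final

section Tiling

variable {c s : ℝ} (pyth : c ^ 2 + s ^ 2 = 1) (hs : 0 < s)

include pyth hs in
lemma TS_sUnion : ⋃₀ TS c s = Set.univ := by
  apply Set.eq_univ_of_forall
  intro p
  obtain ⟨f, k, m, hp⟩ := TS_cover pyth hs p
  exact ⟨tl c s f k m, tl_mem_TS c s f k m, hp⟩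

include pyth hs in
lemma TS_disjoint : ∀ t ∈ TS c s, ∀ u ∈ TS c s, t ≠ u → interior t ∩ interior u = ∅ := by
  intro t ht u hu htu
  obtain ⟨f, k, m, rfl⟩ := TS_mem ht
  obtain ⟨g, k', m', rfl⟩ := TS_mem hu
  apply tiles_disjoint pyth hs
  rintro ⟨rfl, rfl, rfl⟩
  exact htu rfl

end Tiling

end NP

/-- For every angle θ with 0 < θ < π, there is a non-periodic tiling of the
plane by isometric copies of the unit equilateral triangle and the unit rhombus of angle θ,
in which both prototiles are used. -/
theorem stmt_0 :
    ∀ θ : ℝ, 0 < θ → θ < Real.pi →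
      ∃ 𝒯 : Set (Set Pt),
        IsTilingBy 𝒯 {uT, uR θ} ∧
        (∃ t ∈ 𝒯, ∃ f : Pt ≃ᵢ Pt, t = f '' uT) ∧
        (∃ t ∈ 𝒯, ∃ f : Pt ≃ᵢ Pt, t = f '' uR θ) ∧
        Nonperiodic 𝒯 := by
  intro θ hθ0 hθπ
  have pyth : Real.cos θ ^ 2 + Real.sin θ ^ 2 = 1 := Real.cos_sq_add_sin_sq θ
  have hs : 0 < Real.sin θ := Real.sin_pos_of_pos_of_lt_pi hθ0 hθπ
  set c := Real.cos θ with hc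
  set s := Real.sin θ with hsd
  refine ⟨NP.TS c s,
    ⟨NP.TS_countable c s, NP.TS_sUnion pyth hs, NP.TS_disjoint pyth hs, ?_⟩, ?_, ?_,
    NP.TS_nonperiodic pyth hs⟩
  · intro t ht
    obtain ⟨f, k, m, rfl⟩ := NP.TS_mem ht
    cases f
    case f1 =>
      refine ⟨uR θ, Set.mem_insert_of_mem _ rfl, ?_⟩
      rw [NP.uR_eq θ]
      exact NP.tl_proto_rh pyth NP.Fam.f1 (Or.inl rfl) k m
    case f2u =>
      exact ⟨uT, Set.mem_insert _ _, NP.tl_proto_tri pyth NP.Fam.f2u (by tauto) k m⟩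
    case f2d =>
      exact ⟨uT, Set.mem_insert _ _, NP.tl_proto_tri pyth NP.Fam.f2d (by tauto) k m⟩
    case f3 =>
      refine ⟨uR θ, Set.mem_insert_of_mem _ rfl, ?_⟩
      rw [NP.uR_eq θ]
      exact NP.tl_proto_rh pyth NP.Fam.f3 (Or.inr rfl) k m
    case f4a =>
      exact ⟨uT, Set.mem_insert _ _, NP.tl_proto_tri pyth NP.Fam.f4a (by tauto) k m⟩
    case f4b =>
      exact ⟨uT, Set.mem_insert _ _, NP.tl_proto_tri pyth NP.Fam.f4b (by tauto) k m⟩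
  · exact ⟨NP.tl c s NP.Fam.f2u 0 0, NP.tl_mem_TS c s _ 0 0,
      NP.tl_proto_tri pyth NP.Fam.f2u (by tauto) 0 0⟩
  · refine ⟨NP.tl c s NP.Fam.f1 0 0, NP.tl_mem_TS c s _ 0 0, ?_⟩
    rw [NP.uR_eq θ]
    exact NP.tl_proto_rh pyth NP.Fam.f1 (Or.inl rfl) 0 0
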